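/- arXiv:1806.00822 — 7 statements merged into one kernel-verified Lean document; each statement's English description precedes it below -/
import Mathlib

section
/- Let a ∈ K∖F. A map H : A → A is an F-automorphism of the nonassociative cyclic algebra A = (K/F,σ,a) if and only if there exist j ∈ {0,…,m−1} and k ∈ K^× with σ^j(a) = N_{K/F}(k)·a such that H = H_{σ^j,k}. -/
open Finset

/-- The unit element `t^0` of the nonassociative cyclic algebra, in coordinates. -/
def cycOne (K : Type*) [Zero K] [One K] (m : ℕ) : Fin m → K :=
  fun k => if (k : ℕ) = 0 then 1 else 0

/-- The embedding `x ↦ x t^0` of `K` into the nonassociative cyclic algebra. -/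
def cycEmb (K : Type*) [Zero K] (m : ℕ) (x : K) : Fin m → K :=
  fun i => if (i : ℕ) = 0 then x else 0

section

variable {F K : Type*} [Field F] [Field K] [Algebra F K]

/-- Coordinates of the product in the nonassociative cyclic algebra `(K/F, σ, a)`:
`(x t^i) ∘ (y t^j) = x σ^i(y) t^{i+j}` if `i+j < m` and
`(x t^i) ∘ (y t^j) = x σ^i(y) σ^{i+j-m}(a) t^{i+j-m}` if `i+j ≥ m`. -/
def cycMul (m : ℕ) (σ : K ≃ₐ[F] K) (a : K) (u v : Fin m → K) : Fin m → K :=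
  fun k =>
    (∑ i : Fin m, ∑ j : Fin m,
        if (i : ℕ) + (j : ℕ) = (k : ℕ) then u i * (σ ^ (i : ℕ)) (v j) else 0) +
      ∑ i : Fin m, ∑ j : Fin m,
        if (i : ℕ) + (j : ℕ) = (k : ℕ) + m then
          u i * (σ ^ (i : ℕ)) (v j) * (σ ^ (k : ℕ)) a
        else 0

/-- The field norm `N_{K/F}(k) = ∏_{l=0}^{m-1} σ^l(k)`. -/
def cycNorm (m : ℕ) (σ : K ≃ₐ[F] K) (k : K) : K :=
  ∏ l ∈ Finset.range m, (σ ^ l) k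

/-- The map `H_{τ,k} : x t^i ↦ τ(x) (∏_{l=0}^{i-1} σ^l(k)) t^i`. -/
def cycH (m : ℕ) (σ τ : K ≃ₐ[F] K) (k : K) (u : Fin m → K) : Fin m → K :=
  fun i => τ (u i) * ∏ l ∈ Finset.range (i : ℕ), (σ ^ l) k

/-- The map `G_c : x t^i ↦ x c⁻¹ σ^i(c) t^i`. -/
def cycG (m : ℕ) (σ : K ≃ₐ[F] K) (c : K) (u : Fin m → K) : Fin m → K :=
  fun i => u i * c⁻¹ * (σ ^ (i : ℕ)) c

/-- `H` is an `F`-automorphism of the nonassociative cyclic algebra `(K/F, σ, a)`. -/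
def IsCycAut (m : ℕ) (σ : K ≃ₐ[F] K) (a : K) (H : (Fin m → K) → (Fin m → K)) : Prop :=
  Function.Bijective H ∧
    (∀ u v, H (u + v) = H u + H v) ∧
    (∀ (c : F) (u : Fin m → K), H (c • u) = c • H u) ∧
    H (cycOne K m) = cycOne K m ∧
    ∀ u v, H (cycMul m σ a u v) = cycMul m σ a (H u) (H v)

/-- `H` is an inner `F`-automorphism of `(K/F, σ, a)`:
`H(z) = (w_l ∘ z) ∘ w` for some `w ≠ 0` with left inverse `w_l`. -/
def IsCycInner (m : ℕ) (σ : K ≃ₐ[F] K) (a : K) (H : (Fin m → K) → (Fin m → K)) : Prop :=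
  ∃ w wl : Fin m → K, w ≠ 0 ∧ cycMul m σ a wl w = cycOne K m ∧
    ∀ z, H z = cycMul m σ a (cycMul m σ a wl z) w

end

section Aux

variable {F K : Type*} [Field F] [Field K] [Algebra F K]

private lemma fin_sub_val {m : ℕ} (p j : Fin m) : ((p - j : Fin m) : ℕ) =
    if (j : ℕ) ≤ (p : ℕ) then (p : ℕ) - (j : ℕ) else (p : ℕ) + m - (j : ℕ) := by
  have hp := p.isLt; have hj := j.isLt
  rw [Fin.sub_def]
  split_ifs with h
  · show (m - ↑j + ↑p) % m = _
    have h1 : m - ↑j + ↑p = (↑p - ↑j) + m := by omega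
    rw [h1, Nat.add_mod_right, Nat.mod_eq_of_lt (by omega)]
  · show (m - ↑j + ↑p) % m = _
    have h1 : m - ↑j + ↑p = ↑p + m - ↑j := by omega
    rw [h1, Nat.mod_eq_of_lt (by omega)]

private lemma single_eval {m : ℕ} (i : Fin m) (x : K) (p : Fin m) :
    (Pi.single i x : Fin m → K) p = if (p : ℕ) = (i : ℕ) then x else 0 := by
  rw [Pi.single_apply]
  by_cases h : p = i
  · rw [if_pos h, if_pos (by rw [h])]
  · rw [if_neg h, if_neg (fun hc => h (Fin.ext hc))]

private lemma smul_single {m : ℕ} (i : Fin m) (x y : K) :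
    x • (Pi.single i y : Fin m → K) = Pi.single i (x * y) := by
  funext p
  simp only [Pi.smul_apply, smul_eq_mul, single_eval, mul_ite, mul_zero]

private lemma pow_apply_comm (σ : K ≃ₐ[F] K) (i j : ℕ) (x : K) :
    (σ ^ i) ((σ ^ j) x) = (σ ^ j) ((σ ^ i) x) := by
  rw [← AlgEquiv.mul_apply, ← AlgEquiv.mul_apply, ← pow_add, ← pow_add, add_comm]

private lemma mu_add (σ : K ≃ₐ[F] K) (k : K) (i j : ℕ) :
    (∏ l ∈ range (i + j), (σ ^ l) k) =
      (∏ l ∈ range i, (σ ^ l) k) * (σ ^ i) (∏ l ∈ range j, (σ ^ l) k) := by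
  rw [Finset.prod_range_add, map_prod]
  congr 1
  refine Finset.prod_congr rfl fun l _ => ?_
  rw [← AlgEquiv.mul_apply, ← pow_add]

private lemma cycMul_single_right {m : ℕ} (σ : K ≃ₐ[F] K) (a : K)
    (u : Fin m → K) (j : Fin m) (y : K) (p : Fin m) :
    cycMul m σ a u (Pi.single j y) p =
      if (j : ℕ) ≤ (p : ℕ) then u (p - j) * (σ ^ ((p : ℕ) - (j : ℕ))) y
      else u (p - j) * (σ ^ ((p : ℕ) + m - (j : ℕ))) y * (σ ^ (p : ℕ)) a := by
  have hp := p.isLt; have hj := j.isLt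
  have hsub := fin_sub_val p j
  unfold cycMul
  have h1 : ∀ i : Fin m,
      (∑ j' : Fin m, if (i : ℕ) + (j' : ℕ) = (p : ℕ) then
          u i * (σ ^ (i : ℕ)) ((Pi.single j y : Fin m → K) j') else 0)
        = (if (i : ℕ) + (j : ℕ) = (p : ℕ) then u i * (σ ^ (i : ℕ)) y else 0) := by
    intro i
    rw [Finset.sum_eq_single j]
    · rw [Pi.single_eq_same]
    · intro b _ hb
      rw [Pi.single_eq_of_ne hb, map_zero, mul_zero, ite_self]
    · intro habs; exact absurd (Finset.mem_univ j) habs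
  have h2 : ∀ i : Fin m,
      (∑ j' : Fin m, if (i : ℕ) + (j' : ℕ) = (p : ℕ) + m then
          u i * (σ ^ (i : ℕ)) ((Pi.single j y : Fin m → K) j') * (σ ^ (p : ℕ)) a else 0)
        = (if (i : ℕ) + (j : ℕ) = (p : ℕ) + m then
            u i * (σ ^ (i : ℕ)) y * (σ ^ (p : ℕ)) a else 0) := by
    intro i
    rw [Finset.sum_eq_single j]
    · rw [Pi.single_eq_same]
    · intro b _ hb
      rw [Pi.single_eq_of_ne hb, map_zero, mul_zero, zero_mul, ite_self]
    · intro habs; exact absurd (Finset.mem_univ j) habs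
  rw [Finset.sum_congr rfl fun i _ => h1 i, Finset.sum_congr rfl fun i _ => h2 i]
  by_cases h : (j : ℕ) ≤ (p : ℕ)
  · rw [if_pos h] at hsub
    rw [if_pos h]
    have e1 : (∑ i : Fin m, if (i : ℕ) + (j : ℕ) = (p : ℕ) then u i * (σ ^ (i : ℕ)) y else 0)
        = u (p - j) * (σ ^ ((p : ℕ) - (j : ℕ))) y := by
      rw [Finset.sum_eq_single (p - j)]
      · rw [if_pos (by omega), hsub]
      · intro b _ hb
        rw [if_neg (fun hc => hb (Fin.ext (by omega)))]
      · intro habs; exact absurd (Finset.mem_univ _) habs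
    have e2 : (∑ i : Fin m, if (i : ℕ) + (j : ℕ) = (p : ℕ) + m then
          u i * (σ ^ (i : ℕ)) y * (σ ^ (p : ℕ)) a else 0) = 0 := by
      refine Finset.sum_eq_zero fun i _ => ?_
      rw [if_neg (by have := i.isLt; omega)]
    rw [e1, e2, add_zero]
  · rw [if_neg h] at hsub
    rw [if_neg h]
    have e1 : (∑ i : Fin m, if (i : ℕ) + (j : ℕ) = (p : ℕ) then u i * (σ ^ (i : ℕ)) y else 0)
        = 0 := by
      refine Finset.sum_eq_zero fun i _ => ?_
      rw [if_neg (by omega)]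
    have e2 : (∑ i : Fin m, if (i : ℕ) + (j : ℕ) = (p : ℕ) + m then
          u i * (σ ^ (i : ℕ)) y * (σ ^ (p : ℕ)) a else 0)
        = u (p - j) * (σ ^ ((p : ℕ) + m - (j : ℕ))) y * (σ ^ (p : ℕ)) a := by
      rw [Finset.sum_eq_single (p - j)]
      · rw [if_pos (by omega), hsub]
      · intro b _ hb
        rw [if_neg (fun hc => hb (Fin.ext (by omega)))]
      · intro habs; exact absurd (Finset.mem_univ _) habs
    rw [e1, e2, zero_add]

private lemma cycMul_smul_left {m : ℕ} (σ : K ≃ₐ[F] K) (a : K) (x : K) (u v : Fin m → K) :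
    cycMul m σ a (x • u) v = x • cycMul m σ a u v := by
  funext p
  simp only [cycMul, Pi.smul_apply, smul_eq_mul, Finset.mul_sum, mul_ite, mul_zero, mul_add,
    mul_assoc]

private lemma cycMul_single_zero_left {m : ℕ} (h0 : 0 < m) (σ : K ≃ₐ[F] K) (a : K)
    (x : K) (v : Fin m → K) :
    cycMul m σ a (Pi.single (⟨0, h0⟩ : Fin m) x) v = x • v := by
  funext p
  simp only [cycMul, Pi.smul_apply, smul_eq_mul]
  have e1 : (∑ i : Fin m, ∑ j : Fin m,
      if (i : ℕ) + (j : ℕ) = (p : ℕ) then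
        (Pi.single (⟨0, h0⟩ : Fin m) x : Fin m → K) i * (σ ^ (i : ℕ)) (v j) else 0)
      = x * v p := by
    rw [Finset.sum_eq_single (⟨0, h0⟩ : Fin m)]
    · rw [Finset.sum_eq_single p]
      · simp
      · intro b _ hb
        rw [if_neg (by simp only [Fin.val_mk, zero_add]; exact fun hc => hb (Fin.ext hc))]
      · intro habs; exact absurd (Finset.mem_univ _) habs
    · intro b _ hb
      refine Finset.sum_eq_zero fun j _ => ?_
      rw [Pi.single_eq_of_ne hb, zero_mul, ite_self]
    · intro habs; exact absurd (Finset.mem_univ _) habs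
  have e2 : (∑ i : Fin m, ∑ j : Fin m,
      if (i : ℕ) + (j : ℕ) = (p : ℕ) + m then
        (Pi.single (⟨0, h0⟩ : Fin m) x : Fin m → K) i * (σ ^ (i : ℕ)) (v j) * (σ ^ (p : ℕ)) a
      else 0) = 0 := by
    refine Finset.sum_eq_zero fun i _ => ?_
    refine Finset.sum_eq_zero fun j _ => ?_
    rcases eq_or_ne i (⟨0, h0⟩ : Fin m) with rfl | hi
    · rw [if_neg]
      have := j.isLt; have := p.isLt
      simp only [Fin.val_mk, zero_add]
      omega
    · rw [Pi.single_eq_of_ne hi, zero_mul, zero_mul, ite_self]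
  rw [e1, e2, add_zero]

private lemma cycOne_eq {m : ℕ} (h0 : 0 < m) :
    cycOne K m = Pi.single (⟨0, h0⟩ : Fin m) (1 : K) := by
  funext p
  rw [single_eval]
  rfl

private lemma cycH_isAut (m : ℕ) (σ : K ≃ₐ[F] K) (a : K) (j : ℕ) (k : K) (hk : k ≠ 0)
    (hja : (σ ^ j) a = cycNorm m σ k * a) :
    IsCycAut m σ a (cycH m σ (σ ^ j) k) := by
  have hμ : ∀ p : ℕ, (∏ l ∈ range p, (σ ^ l) k) ≠ 0 := by
    intro p
    refine Finset.prod_ne_zero_iff.mpr fun l _ => fun hc => hk ?_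
    exact (σ ^ l).injective (hc.trans (map_zero (σ ^ l)).symm)
  refine ⟨?_, ?_, ?_, ?_, ?_⟩
  · refine Function.bijective_iff_has_inverse.mpr
      ⟨fun u i => (σ ^ j).symm (u i * (∏ l ∈ range (i : ℕ), (σ ^ l) k)⁻¹), ?_, ?_⟩
    · intro u
      funext i
      simp only [cycH]
      rw [mul_assoc, mul_inv_cancel₀ (hμ _), mul_one, AlgEquiv.symm_apply_apply]
    · intro u
      funext i
      simp only [cycH]
      rw [AlgEquiv.apply_symm_apply, mul_assoc, inv_mul_cancel₀ (hμ _), mul_one]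
  · intro u v
    funext i
    simp only [cycH, Pi.add_apply, map_add, add_mul]
  · intro c u
    funext i
    simp only [cycH, Pi.smul_apply, map_smul, smul_mul_assoc]
  · funext i
    simp only [cycH, cycOne]
    rcases eq_or_ne ((i : ℕ)) 0 with h | h
    · rw [if_pos h, h, Finset.range_zero, Finset.prod_empty, mul_one, map_one]
    · rw [if_neg h, map_zero, zero_mul]
  · intro u v
    funext p
    show (σ ^ j) (cycMul m σ a u v p) * _ = _
    simp only [cycMul, cycH]
    rw [map_add, add_mul]
    congr 1
    · rw [map_sum, Finset.sum_mul]
      refine Finset.sum_congr rfl fun i _ => ?_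
      rw [map_sum, Finset.sum_mul]
      refine Finset.sum_congr rfl fun j' _ => ?_
      simp only [apply_ite (⇑(σ ^ j)), map_zero, ite_mul, zero_mul]
      split_ifs with h
      · rw [map_mul, map_mul (σ ^ (i : ℕ)), pow_apply_comm σ (i : ℕ) j (v j')]
        have hμm : (∏ l ∈ range (p : ℕ), (σ ^ l) k) =
            (∏ l ∈ range (i : ℕ), (σ ^ l) k) *
              (σ ^ (i : ℕ)) (∏ l ∈ range (j' : ℕ), (σ ^ l) k) := by
          rw [← h]; exact mu_add σ k _ _
        linear_combination ((σ ^ j) (u i) * (σ ^ j) ((σ ^ (i : ℕ)) (v j'))) * hμm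
      · rfl
    · rw [map_sum, Finset.sum_mul]
      refine Finset.sum_congr rfl fun i _ => ?_
      rw [map_sum, Finset.sum_mul]
      refine Finset.sum_congr rfl fun j' _ => ?_
      simp only [apply_ite (⇑(σ ^ j)), map_zero, ite_mul, zero_mul]
      split_ifs with h
      · rw [map_mul, map_mul, map_mul (σ ^ (i : ℕ)), pow_apply_comm σ (i : ℕ) j (v j'),
          pow_apply_comm σ j (p : ℕ) a, hja, map_mul]
        have hμ2 : (∏ l ∈ range (i : ℕ), (σ ^ l) k) *
              (σ ^ (i : ℕ)) (∏ l ∈ range (j' : ℕ), (σ ^ l) k) =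
            (∏ l ∈ range (p : ℕ), (σ ^ l) k) * (σ ^ (p : ℕ)) (cycNorm m σ k) := by
          rw [← mu_add, h, mu_add]
          rfl
        linear_combination
          (-((σ ^ j) (u i) * (σ ^ j) ((σ ^ (i : ℕ)) (v j')) * (σ ^ (p : ℕ)) a)) * hμ2
      · rfl

end Aux

/-- A map `H : A → A` is an `F`-automorphism of the nonassociative cyclic
algebra `A = (K/F,σ,a)` (with `a ∈ K∖F`) if and only if there exist `j ∈ {0,…,m−1}` and
`k ∈ K^×` with `σ^j(a) = N_{K/F}(k)·a` such that `H = H_{σ^j,k}`. -/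
theorem stmt0 {F K : Type*} [Field F] [Field K] [Algebra F K]
    (m : ℕ) (hm : 2 ≤ m) [IsGalois F K] [FiniteDimensional F K]
    (hrank : Module.finrank F K = m)
    (σ : K ≃ₐ[F] K) (hgen : ∀ τ : K ≃ₐ[F] K, τ ∈ Subgroup.zpowers σ)
    (a : K) (ha : a ∉ Set.range (algebraMap F K))
    (H : (Fin m → K) → (Fin m → K)) :
    IsCycAut m σ a H ↔
      ∃ j < m, ∃ k : K, k ≠ 0 ∧ (σ ^ j) a = cycNorm m σ k * a ∧
        H = cycH m σ (σ ^ j) k := by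
  constructor
  · rintro ⟨hbij, hadd, hsmul, hone, hmul⟩
    have hm0 : 0 < m := by omega
    have hm1 : 1 < m := hm
    have hmm1 : m - 1 < m := by omega
    have H0 : H 0 = 0 := by
      have h := hadd 0 0
      rw [add_zero] at h
      exact (left_eq_add.mp h)
    have hord : orderOf σ = m := by
      rw [orderOf_eq_card_of_forall_mem_zpowers hgen,
        IsGalois.card_aut_eq_finrank F K, hrank]
    have hσa : σ a ≠ a := by
      intro h
      refine ha ?_
      have hall : ∀ τ : K ≃ₐ[F] K, τ a = a := by
        intro τ
        have hσs : σ ∈ MulAction.stabilizer (K ≃ₐ[F] K) a := h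
        have hmem := Subgroup.zpowers_le.mpr hσs (hgen τ)
        simpa [MulAction.mem_stabilizer_iff, AlgEquiv.smul_def] using hmem
      have hbot : IntermediateField.fixedField (⊤ : Subgroup (K ≃ₐ[F] K)) = ⊥ :=
        OrderIso.map_bot (IsGalois.intermediateFieldEquivSubgroup (F := F) (E := K)).symm
      have hmem : a ∈ IntermediateField.fixedField (⊤ : Subgroup (K ≃ₐ[F] K)) := by
        intro g
        exact hall g
      rw [hbot] at hmem
      exact IntermediateField.mem_bot.mp hmem
    have hstep : ∀ l : ℕ, (σ ^ l) a ≠ (σ ^ (l + 1)) a := by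
      intro l hc
      rw [pow_succ, AlgEquiv.mul_apply] at hc
      exact hσa ((σ ^ l).injective hc.symm)
    have hf0 : ∀ q : Fin m, q - (⟨0, hm0⟩ : Fin m) = q := by
      intro q
      have := q.isLt
      apply Fin.ext
      rw [fin_sub_val]
      simp only [Fin.val_mk]
      split_ifs <;> omega
    -- e_{m-1} ∘ e_1 = a e_0
    have em1e1 : cycMul m σ a (Pi.single (⟨m - 1, hmm1⟩ : Fin m) (1 : K))
        (Pi.single (⟨1, hm1⟩ : Fin m) (1 : K)) = Pi.single (⟨0, hm0⟩ : Fin m) a := by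
      funext p
      have hp := p.isLt
      simp only [cycMul_single_right, single_eval, fin_sub_val, Fin.val_mk, map_one, mul_one,
        one_mul, Nat.sub_zero]
      by_cases h1p : 1 ≤ (p : ℕ)
      · simp only [h1p, if_true, show ¬((p : ℕ) - 1 = m - 1) from by omega, if_false,
          show ¬((p : ℕ) = 0) from by omega, zero_mul]
      · have hp0 : (p : ℕ) = 0 := by omega
        simp only [hp0, pow_zero, AlgEquiv.one_apply]
        norm_num
    -- Step 1: H preserves K·e₀
    have key1 : ∀ x : K, ∀ i : Fin m, (i : ℕ) ≠ 0 →
        H (Pi.single (⟨0, hm0⟩ : Fin m) x) i = 0 := by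
      intro x i hi
      have hii := i.isLt
      obtain ⟨u', hu'⟩ := hbij.2 (Pi.single (⟨m - 1, hmm1⟩ : Fin m) (1 : K))
      obtain ⟨v', hv'⟩ := hbij.2 (Pi.single (⟨1, hm1⟩ : Fin m) (1 : K))
      have lhs0 : cycMul m σ a (cycMul m σ a (Pi.single (⟨0, hm0⟩ : Fin m) x) u') v'
          = cycMul m σ a (Pi.single (⟨0, hm0⟩ : Fin m) x) (cycMul m σ a u' v') := by
        rw [cycMul_single_zero_left hm0, cycMul_smul_left, cycMul_single_zero_left hm0]
      have assoc := congrArg H lhs0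
      simp only [hmul] at assoc
      rw [hu', hv', em1e1] at assoc
      have heval := congrFun assoc i
      simp only [cycMul_single_right, fin_sub_val, Fin.val_mk, map_one, mul_one,
        Nat.sub_zero] at heval
      have hfa : (i - (⟨1, hm1⟩ : Fin m)) - (⟨m - 1, hmm1⟩ : Fin m) = i := by
        apply Fin.ext
        rw [fin_sub_val, fin_sub_val]
        simp only [Fin.val_mk]
        split_ifs <;> omega
      rw [hfa, hf0] at heval
      simp only [show (1 ≤ (i : ℕ)) = True from eq_true (by omega),
        show (m - 1 ≤ (i : ℕ) - 1) = False from eq_false (by omega),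
        show (0 ≤ (i : ℕ)) = True from eq_true (Nat.zero_le _),
        if_true, if_false] at heval
      by_contra hne
      have hcan := mul_left_cancel₀ hne heval
      have hst := hstep ((i : ℕ) - 1)
      rw [show (i : ℕ) - 1 + 1 = (i : ℕ) from by omega] at hst
      exact hst hcan
    -- the induced map on K
    set φ : K → K := fun x => H (Pi.single (⟨0, hm0⟩ : Fin m) x) (⟨0, hm0⟩ : Fin m) with hφdef
    have hφ : ∀ x : K, H (Pi.single (⟨0, hm0⟩ : Fin m) x)
        = Pi.single (⟨0, hm0⟩ : Fin m) (φ x) := by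
      intro x
      funext p
      rcases eq_or_ne ((p : ℕ)) 0 with h | h
      · have hp : p = (⟨0, hm0⟩ : Fin m) := Fin.ext h
        rw [hp, Pi.single_eq_same]
      · rw [key1 x p h, single_eval, if_neg h]
    have hφ1 : φ 1 = 1 := by
      show H (Pi.single (⟨0, hm0⟩ : Fin m) 1) (⟨0, hm0⟩ : Fin m) = 1
      rw [← cycOne_eq hm0, hone, cycOne_eq hm0, Pi.single_eq_same]
    have hφ0 : φ 0 = 0 := by
      show H (Pi.single (⟨0, hm0⟩ : Fin m) 0) (⟨0, hm0⟩ : Fin m) = 0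
      rw [Pi.single_zero, H0]
      rfl
    have hφadd : ∀ x y : K, φ (x + y) = φ x + φ y := by
      intro x y
      have h1 : (Pi.single (⟨0, hm0⟩ : Fin m) (x + y) : Fin m → K)
          = Pi.single (⟨0, hm0⟩ : Fin m) x + Pi.single (⟨0, hm0⟩ : Fin m) y :=
        Pi.single_add _ _ _
      have h2 := congrArg H h1
      rw [hadd, hφ, hφ, hφ] at h2
      have h3 := congrFun h2 (⟨0, hm0⟩ : Fin m)
      simpa [Pi.single_eq_same] using h3
    have hφmul : ∀ x y : K, φ (x * y) = φ x * φ y := by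
      intro x y
      have h1 : cycMul m σ a (Pi.single (⟨0, hm0⟩ : Fin m) x) (Pi.single (⟨0, hm0⟩ : Fin m) y)
          = Pi.single (⟨0, hm0⟩ : Fin m) (x * y) := by
        rw [cycMul_single_zero_left hm0, smul_single]
      have h2 := congrArg H h1
      rw [hmul, hφ, hφ, hφ, cycMul_single_zero_left hm0, smul_single] at h2
      have h3 := congrFun h2 (⟨0, hm0⟩ : Fin m)
      simpa [Pi.single_eq_same] using h3.symm
    have hφsmul : ∀ (c : F) (x : K), φ (c • x) = c • φ x := by
      intro c x
      have h1 : (Pi.single (⟨0, hm0⟩ : Fin m) (c • x) : Fin m → K)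
          = c • (Pi.single (⟨0, hm0⟩ : Fin m) x : Fin m → K) := by
        funext p
        simp only [Pi.smul_apply, single_eval, smul_ite, smul_zero]
      have h2 := congrArg H h1
      rw [hsmul, hφ, hφ] at h2
      have h3 := congrFun h2 (⟨0, hm0⟩ : Fin m)
      simpa [Pi.single_eq_same] using h3
    have hφcomm : ∀ c : F, φ (algebraMap F K c) = algebraMap F K c := by
      intro c
      rw [Algebra.algebraMap_eq_smul_one, hφsmul, hφ1]
    have hφinj : Function.Injective φ := by
      intro x y hxy
      have h1 : H (Pi.single (⟨0, hm0⟩ : Fin m) x) = H (Pi.single (⟨0, hm0⟩ : Fin m) y) := by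
        rw [hφ, hφ, hxy]
      have h2 := hbij.1 h1
      have h3 := congrFun h2 (⟨0, hm0⟩ : Fin m)
      rwa [Pi.single_eq_same, Pi.single_eq_same] at h3
    let φA : K →ₐ[F] K :=
      { toFun := φ, map_one' := hφ1, map_mul' := hφmul, map_zero' := hφ0,
        map_add' := hφadd, commutes' := hφcomm }
    have hφsurj : Function.Surjective φ := by
      have h := (LinearMap.injective_iff_surjective (f := φA.toLinearMap)).mp hφinj
      exact h
    let φE : K ≃ₐ[F] K := AlgEquiv.ofBijective φA ⟨hφinj, hφsurj⟩
    obtain ⟨z, hz⟩ := Subgroup.mem_zpowers_iff.mp (hgen φE)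
    set j : ℕ := (z % (m : ℤ)).toNat with hjdef
    have hjnn : ((j : ℕ) : ℤ) = z % (m : ℤ) :=
      Int.toNat_of_nonneg (Int.emod_nonneg z (by exact_mod_cast hm0.ne'))
    have hjm : j < m := by
      have h1 := Int.emod_lt_of_pos z (show (0 : ℤ) < m by exact_mod_cast hm0)
      omega
    have hσj : σ ^ j = φE := by
      calc σ ^ j = σ ^ ((j : ℕ) : ℤ) := (zpow_natCast σ j).symm
        _ = σ ^ (z % ((orderOf σ : ℕ) : ℤ)) := by rw [hjnn, hord]
        _ = σ ^ z := zpow_mod_orderOf σ z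
        _ = φE := hz
    have hjx : ∀ x : K, (σ ^ j) x = φ x := by
      intro x
      rw [hσj]
      rfl
    have hφ' : ∀ x : K, H (Pi.single (⟨0, hm0⟩ : Fin m) x)
        = Pi.single (⟨0, hm0⟩ : Fin m) ((σ ^ j) x) := by
      intro x
      rw [hφ x, hjx x]
    -- Step 3: H(e₁) = k₀ e₁
    have r1 : ∀ x : K, cycMul m σ a (Pi.single (⟨1, hm1⟩ : Fin m) (1 : K))
        (Pi.single (⟨0, hm0⟩ : Fin m) x) = Pi.single (⟨1, hm1⟩ : Fin m) (σ x) := by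
      intro x
      funext p
      have hp := p.isLt
      rw [cycMul_single_right, if_pos (Nat.zero_le _), hf0]
      rw [single_eval, single_eval]
      by_cases hp1 : (p : ℕ) = 1
      · rw [if_pos hp1, if_pos hp1, one_mul,
          show (p : ℕ) - ((⟨0, hm0⟩ : Fin m) : ℕ) = 1 from by simp only [Fin.val_mk]; omega,
          pow_one]
      · rw [if_neg hp1, if_neg hp1, zero_mul]
    have hA2 : ∀ y : K, H (Pi.single (⟨1, hm1⟩ : Fin m) y)
        = (σ ^ j) y • H (Pi.single (⟨1, hm1⟩ : Fin m) 1) := by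
      intro y
      have r2 : cycMul m σ a (Pi.single (⟨0, hm0⟩ : Fin m) y) (Pi.single (⟨1, hm1⟩ : Fin m) 1)
          = Pi.single (⟨1, hm1⟩ : Fin m) y := by
        rw [cycMul_single_zero_left hm0, smul_single, mul_one]
      have h2 := hmul (Pi.single (⟨0, hm0⟩ : Fin m) y) (Pi.single (⟨1, hm1⟩ : Fin m) 1)
      rw [r2, hφ'] at h2
      rw [h2, cycMul_single_zero_left hm0]
    have hb0 : ∀ i : Fin m, (i : ℕ) ≠ 1 → H (Pi.single (⟨1, hm1⟩ : Fin m) 1) i = 0 := by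
      intro i hi
      have hii := i.isLt
      by_contra hne
      have hrel : ∀ x : K, (σ ^ (i : ℕ)) x = σ x := by
        intro x
        have hA1 := hmul (Pi.single (⟨1, hm1⟩ : Fin m) 1) (Pi.single (⟨0, hm0⟩ : Fin m) x)
        rw [r1 x, hφ'] at hA1
        have e1 := congrFun hA1 i
        rw [hA2 (σ x), cycMul_single_right, if_pos (Nat.zero_le _), hf0] at e1
        simp only [Pi.smul_apply, smul_eq_mul, Fin.val_mk, Nat.sub_zero] at e1
        have hc := (mul_left_cancel₀ hne ((mul_comm ((σ ^ j) (σ x))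
          (H (Pi.single (⟨1, hm1⟩ : Fin m) 1) i) ▸ e1))).symm
        rw [pow_apply_comm σ (i : ℕ) j x] at hc
        exact (σ ^ j).injective hc
      have hpow : σ ^ (i : ℕ) = σ ^ 1 := by
        rw [pow_one]
        exact AlgEquiv.ext hrel
      have hmod := pow_eq_pow_iff_modEq.mp hpow
      rw [hord] at hmod
      have h1 : (i : ℕ) % m = 1 % m := hmod
      rw [Nat.mod_eq_of_lt (by omega), Nat.mod_eq_of_lt (by omega)] at h1
      exact hi h1
    set k0 : K := H (Pi.single (⟨1, hm1⟩ : Fin m) 1) (⟨1, hm1⟩ : Fin m) with hk0def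
    have hb : H (Pi.single (⟨1, hm1⟩ : Fin m) 1) = Pi.single (⟨1, hm1⟩ : Fin m) k0 := by
      funext p
      rcases eq_or_ne ((p : ℕ)) 1 with h | h
      · have hp : p = (⟨1, hm1⟩ : Fin m) := Fin.ext h
        rw [hp, Pi.single_eq_same]
      · rw [hb0 p h, single_eval, if_neg h]
    have hk0 : k0 ≠ 0 := by
      intro h
      have h1 : H (Pi.single (⟨1, hm1⟩ : Fin m) (1 : K)) = H 0 := by
        rw [hb, h, Pi.single_zero, H0]
      have h2 := hbij.1 h1
      have h3 := congrFun h2 (⟨1, hm1⟩ : Fin m)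
      rw [Pi.single_eq_same] at h3
      exact one_ne_zero h3
    -- Step 4: H(e_n) = μ_n e_n
    have hbase : ∀ n : ℕ, ∀ hn : n < m, H (Pi.single (⟨n, hn⟩ : Fin m) (1 : K))
        = Pi.single (⟨n, hn⟩ : Fin m) (∏ l ∈ Finset.range n, (σ ^ l) k0) := by
      intro n
      induction n with
      | zero =>
        intro hn
        rw [← cycOne_eq hm0, hone, cycOne_eq hm0]
        simp
      | succ n ih =>
        intro hn
        have hn' : n < m := by omega
        have hprod : cycMul m σ a (Pi.single (⟨n, hn'⟩ : Fin m) (1 : K))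
            (Pi.single (⟨1, hm1⟩ : Fin m) (1 : K)) = Pi.single (⟨n + 1, hn⟩ : Fin m) (1 : K) := by
          funext p
          have hp := p.isLt
          simp only [cycMul_single_right, single_eval, fin_sub_val, Fin.val_mk, map_one,
            mul_one, one_mul]
          by_cases h1p : 1 ≤ (p : ℕ)
          · simp only [h1p, if_true]
            by_cases hpn : (p : ℕ) = n + 1
            · simp only [show ((p : ℕ) - 1 = n) = True from eq_true (by omega), if_true,
                hpn, if_pos rfl, show (n + 1 - 1 = n) = True from eq_true (by omega)]
            · simp only [show ((p : ℕ) - 1 = n) = False from eq_false (by omega), if_false,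
                show ((p : ℕ) = n + 1) = False from eq_false hpn, if_false]
          · simp only [h1p, if_false,
              show ((p : ℕ) + m - 1 = n) = False from eq_false (by omega), if_false,
              show ((p : ℕ) = n + 1) = False from eq_false (by omega), if_false, zero_mul]
        have h2 := congrArg H hprod
        rw [hmul, ih hn', hb] at h2
        rw [← h2]
        funext p
        have hp := p.isLt
        simp only [cycMul_single_right, single_eval, fin_sub_val, Fin.val_mk]
        by_cases h1p : 1 ≤ (p : ℕ)
        · simp only [h1p, if_true]
          by_cases hpn : (p : ℕ) = n + 1
          · simp only [show ((p : ℕ) - 1 = n) = True from eq_true (by omega), if_true,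
              show ((p : ℕ) = n + 1) = True from eq_true hpn, if_true,
              show (p : ℕ) - 1 = n from by omega, Finset.prod_range_succ]
          · simp only [show ((p : ℕ) - 1 = n) = False from eq_false (by omega), if_false,
              show ((p : ℕ) = n + 1) = False from eq_false hpn, if_false, zero_mul]
        · simp only [h1p, if_false,
            show ((p : ℕ) + m - 1 = n) = False from eq_false (by omega), if_false,
            show ((p : ℕ) = n + 1) = False from eq_false (by omega), if_false, zero_mul,
            zero_mul]
    have hbase' : ∀ i : Fin m, H (Pi.single i (1 : K))
        = Pi.single i (∏ l ∈ Finset.range (i : ℕ), (σ ^ l) k0) := by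
      intro i
      have h := hbase (i : ℕ) i.isLt
      rwa [Fin.eta] at h
    -- Step 5
    have hsingle : ∀ (i : Fin m) (x : K), H (Pi.single i x)
        = Pi.single i ((σ ^ j) x * ∏ l ∈ Finset.range (i : ℕ), (σ ^ l) k0) := by
      intro i x
      have h1 : cycMul m σ a (Pi.single (⟨0, hm0⟩ : Fin m) x) (Pi.single i (1 : K))
          = Pi.single i x := by
        rw [cycMul_single_zero_left hm0, smul_single, mul_one]
      have h2 := congrArg H h1
      rw [hmul, hφ', hbase', cycMul_single_zero_left hm0, smul_single] at h2
      exact h2.symm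
    -- Step 6 : H = cycH
    have Hsum : ∀ (s : Finset (Fin m)) (f : Fin m → Fin m → K),
        H (∑ i ∈ s, f i) = ∑ i ∈ s, H (f i) := by
      intro s f
      induction s using Finset.cons_induction with
      | empty => simpa using H0
      | cons i s hi ih => rw [Finset.sum_cons, hadd, ih, Finset.sum_cons]
    have hH : H = cycH m σ (σ ^ j) k0 := by
      funext u
      conv_lhs => rw [← Finset.univ_sum_single u]
      rw [Hsum, Finset.sum_congr rfl fun i _ => hsingle i (u i), Finset.univ_sum_single]
      rfl
    -- Step 7 : norm equation
    have h7 := congrArg H em1e1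
    rw [hmul, hbase (m - 1) hmm1, hb, hφ' a] at h7
    have h70 := congrFun h7 (⟨0, hm0⟩ : Fin m)
    simp only [cycMul_single_right, single_eval, fin_sub_val, Fin.val_mk] at h70
    simp only [show ((1 : ℕ) ≤ 0) = False from eq_false (by omega), if_false,
      show (0 + m - 1 = m - 1) = True from eq_true (by omega), if_true,
      show ((0 : ℕ) = 0) = True from eq_true rfl, pow_zero, AlgEquiv.one_apply] at h70
    refine ⟨j, hjm, k0, hk0, ?_, hH⟩
    have hN : cycNorm m σ k0 = (∏ l ∈ Finset.range (m - 1), (σ ^ l) k0) * (σ ^ (m - 1)) k0 := by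
      conv_lhs => rw [cycNorm, show m = (m - 1) + 1 from by omega, Finset.prod_range_succ]
    rw [hN, ← h70]
    ring
  · rintro ⟨j, hjm, k, hk, hja, rfl⟩
    exact cycH_isAut m σ a j k hk hja
end

section
/- Let a ∈ K∖F and A = (K/F,σ,a). Then: (i) for every c ∈ K^×, G_c is an F-automorphism of A and satisfies G_c(z) = (c^{−1} ∘ z) ∘ c for all z ∈ A; (ii) for c, d ∈ K^×, G_c = G_d if and only if c^{−1}σ(c) = d^{−1}σ(d); (iii) the set N = {G_c : c ∈ K^×} is an abelian normal subgroup of Aut_F(A) isomorphic to the kernel of the norm map N_{K/F} : K^× → F^×; (iv) G_c is not the identity for every c ∈ K∖F, so in particular Aut_F(A) is nontrivial. -/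
open Finset

section Helpers
namespace CycAux
variable {F K : Type*} [Field F] [Field K] [Algebra F K]
variable (m : ℕ) (σ : K ≃ₐ[F] K) (a : K)

-- L1 : left multiplication by an embedded scalar
lemma emb_mul (x : K) (z : Fin m → K) (hm : 0 < m) :
    cycMul m σ a (fun j => if (j : ℕ) = 0 then x else 0) z = fun k => x * z k := by
  funext k
  unfold cycMul
  have h2 : (∑ i : Fin m, ∑ j : Fin m,
      if (i : ℕ) + (j : ℕ) = (k : ℕ) + m then
        (if (i : ℕ) = 0 then x else 0) * (σ ^ (i : ℕ)) (z j) * (σ ^ (k : ℕ)) a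
      else 0) = 0 := by
    apply Finset.sum_eq_zero; intro i _
    apply Finset.sum_eq_zero; intro j _
    have := j.isLt
    split_ifs with h h' <;> first | omega | simp
  rw [h2, add_zero]
  rw [Finset.sum_eq_single (⟨0, hm⟩ : Fin m)]
  · simp only [Fin.val_mk, pow_zero, AlgEquiv.one_apply, if_pos rfl, zero_add]
    rw [Finset.sum_eq_single k]
    · simp
    · intro b _ hb
      rw [if_neg]
      exact fun h => hb (Fin.ext h)
    · simp
  · intro b _ hb
    have : (b : ℕ) ≠ 0 := fun h => hb (Fin.ext h)
    apply Finset.sum_eq_zero; intro j _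
    simp [this]
  · simp

-- L6 : right multiplication by a single basis component
lemma mul_single (d : ℕ) (hd : d < m) (x : K) (u : Fin m → K) (k : Fin m) :
    cycMul m σ a u (fun j => if (j : ℕ) = d then x else 0) k =
      if h : d ≤ (k : ℕ) then u ⟨(k : ℕ) - d, by omega⟩ * (σ ^ ((k : ℕ) - d)) x
      else u ⟨(k : ℕ) + m - d, by have := k.isLt; omega⟩ * (σ ^ ((k : ℕ) + m - d)) x
        * (σ ^ (k : ℕ)) a := by
  have hk := k.isLt
  unfold cycMul
  have e1 : ∀ (c : ℕ) (w : Fin m → K), (∑ i : Fin m, ∑ j : Fin m,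
      if (i : ℕ) + (j : ℕ) = c then w i * (σ ^ (i : ℕ)) (if (j : ℕ) = d then x else 0) else 0)
      = ∑ i : Fin m, if (i : ℕ) + d = c then w i * (σ ^ (i : ℕ)) x else 0 := by
    intro c w
    apply Finset.sum_congr rfl; intro i _
    rw [Finset.sum_eq_single (⟨d, hd⟩ : Fin m)]
    · simp
    · intro b _ hb
      have : (b : ℕ) ≠ d := fun h => hb (Fin.ext h)
      simp [this]
    · simp
  have e2 : (∑ i : Fin m, ∑ j : Fin m,
      if (i : ℕ) + (j : ℕ) = (k : ℕ) + m then
        u i * (σ ^ (i : ℕ)) ((fun j : Fin m => if (j : ℕ) = d then x else 0) j) * (σ ^ (k : ℕ)) a else 0)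
      = ∑ i : Fin m, if (i : ℕ) + d = (k : ℕ) + m then u i * (σ ^ (i : ℕ)) x * (σ ^ (k : ℕ)) a
        else 0 := by
    apply Finset.sum_congr rfl; intro i _
    rw [Finset.sum_eq_single (⟨d, hd⟩ : Fin m)]
    · simp
    · intro b _ hb
      have : (b : ℕ) ≠ d := fun h => hb (Fin.ext h)
      simp [this]
    · simp
  rw [e1, e2]
  by_cases h : d ≤ (k : ℕ)
  · rw [dif_pos h]
    have z2 : (∑ i : Fin m, if (i : ℕ) + d = (k : ℕ) + m then
        u i * (σ ^ (i : ℕ)) x * (σ ^ (k : ℕ)) a else 0) = 0 := by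
      apply Finset.sum_eq_zero; intro i _
      have := i.isLt
      rw [if_neg (by omega)]
    rw [z2, add_zero, Finset.sum_eq_single (⟨(k : ℕ) - d, by omega⟩ : Fin m)]
    · rw [if_pos (by simp; omega)]
    · intro b _ hb
      have : (b : ℕ) ≠ (k : ℕ) - d := fun hh => hb (Fin.ext hh)
      rw [if_neg (by omega)]
    · simp
  · rw [dif_neg h]
    have z1 : (∑ i : Fin m, if (i : ℕ) + d = (k : ℕ) then u i * (σ ^ (i : ℕ)) x else 0) = 0 := by
      apply Finset.sum_eq_zero; intro i _
      rw [if_neg (by omega)]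
    rw [z1, zero_add, Finset.sum_eq_single (⟨(k : ℕ) + m - d, by omega⟩ : Fin m)]
    · rw [if_pos (by simp; omega)]
    · intro b _ hb
      have : (b : ℕ) ≠ (k : ℕ) + m - d := fun hh => hb (Fin.ext hh)
      rw [if_neg (by omega)]
    · simp

lemma delta_mul_delta (d : ℕ) (hd1 : 1 ≤ d) (hdm : d < m) :
    cycMul m σ a (fun j : Fin m => if (j : ℕ) = m - d then 1 else 0)
      (fun j : Fin m => if (j : ℕ) = d then 1 else 0)
      = fun j : Fin m => if (j : ℕ) = 0 then a else 0 := by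
  funext j
  have hj := j.isLt
  rw [mul_single m σ a d hdm]
  simp only [Fin.val_mk]
  by_cases h : d ≤ (j : ℕ)
  · rw [dif_pos h, if_neg (by omega), if_neg (by omega), zero_mul]
  · rw [dif_neg h]
    by_cases h0 : (j : ℕ) = 0
    · rw [if_pos h0, if_pos (by omega), one_mul, map_one, one_mul, h0, pow_zero,
        AlgEquiv.one_apply]
    · rw [if_neg h0, if_neg (by omega), zero_mul, zero_mul]

lemma cancel_aux (x y z s X : K) (hX : X ≠ 0) :
    x * y * X * (z * X⁻¹ * s) = x * z * (y * s) := by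
  have h : x * y * X * (z * X⁻¹ * s) = x * z * (y * s) * (X * X⁻¹) := by ring
  rw [h, mul_inv_cancel₀ hX, mul_one]

lemma smul_mul (x : K) (u v : Fin m → K) :
    cycMul m σ a (fun i => x * u i) v = fun k => x * cycMul m σ a u v k := by
  funext k
  unfold cycMul
  rw [mul_add, Finset.mul_sum, Finset.mul_sum]
  congr 1 <;>
  · apply Finset.sum_congr rfl; intro i _
    rw [Finset.mul_sum]
    apply Finset.sum_congr rfl; intro j _
    rw [mul_ite, mul_zero]
    split_ifs with h
    · ring
    · rfl

lemma G_mul (hσm : σ ^ m = 1) (c : K) (hc : c ≠ 0) (u v : Fin m → K) :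
    cycMul m σ a (cycG m σ c u) (cycG m σ c v) = cycG m σ c (cycMul m σ a u v) := by
  funext k
  have hpow : ∀ i j : ℕ, (σ ^ i) ((σ ^ j) c) = (σ ^ (i + j)) c := by
    intro i j; rw [pow_add]; rfl
  have hX : ∀ i : ℕ, (σ ^ i) c ≠ 0 := fun i h0 =>
    hc (by simpa using (σ ^ i).injective (h0.trans (map_zero (σ ^ i)).symm))
  show _ = cycMul m σ a u v k * c⁻¹ * (σ ^ (k : ℕ)) c
  rw [mul_assoc]
  unfold cycG cycMul
  rw [add_mul, Finset.sum_mul, Finset.sum_mul]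
  congr 1
  · apply Finset.sum_congr rfl; intro i _
    rw [Finset.sum_mul]
    apply Finset.sum_congr rfl; intro j _
    rw [ite_mul, zero_mul]
    split_ifs with h
    · rw [map_mul, map_mul, map_inv₀, hpow, h]
      exact cancel_aux (u i) c⁻¹ ((σ ^ (i : ℕ)) (v j)) ((σ ^ (k : ℕ)) c) ((σ ^ (i : ℕ)) c) (hX _)
    · rfl
  · apply Finset.sum_congr rfl; intro i _
    rw [Finset.sum_mul]
    apply Finset.sum_congr rfl; intro j _
    rw [ite_mul, zero_mul]
    split_ifs with h
    · rw [map_mul, map_mul, map_inv₀, hpow, h, pow_add, hσm, mul_one,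
        cancel_aux _ _ _ _ _ (hX (i : ℕ))]
      ring
    · rfl

lemma ratio (c : K) (hc : c ≠ 0) (n : ℕ) :
    ∏ l ∈ Finset.range n, (σ ^ l) (c⁻¹ * σ c) = c⁻¹ * (σ ^ n) c := by
  induction n with
  | zero => simp [inv_mul_cancel₀ hc]
  | succ n ih =>
      rw [Finset.prod_range_succ, ih, map_mul, map_inv₀]
      have h1 : (σ ^ n) (σ c) = (σ ^ (n + 1)) c := by rw [pow_succ]; rfl
      have hX : (σ ^ n) c ≠ 0 := fun h0 =>
        hc (by simpa using (σ ^ n).injective (h0.trans (map_zero (σ ^ n)).symm))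
      rw [h1]
      field_simp

lemma mul_single_lo (d : ℕ) (hd : d < m) (x : K) (u : Fin m → K) (k r : Fin m)
    (h : (r : ℕ) + d = (k : ℕ)) :
    cycMul m σ a u (fun j => if (j : ℕ) = d then x else 0) k = u r * (σ ^ (r : ℕ)) x := by
  rw [mul_single m σ a d hd x u k, dif_pos (by omega)]
  simp only [show (k : ℕ) - d = (r : ℕ) from by omega, Fin.eta]

lemma mul_single_hi (d : ℕ) (hd : d < m) (x : K) (u : Fin m → K) (k r : Fin m)
    (h : (r : ℕ) + d = (k : ℕ) + m) :
    cycMul m σ a u (fun j => if (j : ℕ) = d then x else 0) k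
      = u r * (σ ^ (r : ℕ)) x * (σ ^ (k : ℕ)) a := by
  have hr := r.isLt
  rw [mul_single m σ a d hd x u k, dif_neg (by omega)]
  simp only [show (k : ℕ) + m - d = (r : ℕ) from by omega, Fin.eta]

lemma nucleus_coord (hm : 2 ≤ m) (ha : σ a ≠ a) (w : Fin m → K)
    (hw : ∀ u v, cycMul m σ a (cycMul m σ a w u) v = cycMul m σ a w (cycMul m σ a u v))
    (k : Fin m) (hk : (k : ℕ) ≠ 0) : w k = 0 := by
  by_contra hwk
  have hkm := k.isLt
  have hA : w k * ((σ ^ (0 : ℕ)) a) = w k * (σ ^ (k : ℕ)) a := by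
    have h := congrFun (hw (fun j => if (j : ℕ) = m - (k : ℕ) then 1 else 0)
      (fun j => if (j : ℕ) = (k : ℕ) then 1 else 0)) k
    rw [delta_mul_delta m σ a (k : ℕ) (by omega) hkm,
      mul_single_lo m σ a 0 (by omega) a w k k (by omega),
      mul_single_lo m σ a (k : ℕ) hkm 1 _ k ⟨0, by omega⟩ (by simp only [Fin.val_mk]; omega),
      mul_single_hi m σ a (m - (k : ℕ)) (by omega) 1 w ⟨0, by omega⟩ k (by simp only [Fin.val_mk]; omega),
      map_one, map_one, mul_one, mul_one] at h
    simpa using h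
  have hB : w k * ((σ ^ ((k : ℕ) - 1)) a) = w k * (σ ^ (k : ℕ)) a := by
    have h := congrFun (hw (fun j => if (j : ℕ) = m - 1 then 1 else 0)
      (fun j => if (j : ℕ) = 1 then 1 else 0)) k
    rw [delta_mul_delta m σ a 1 le_rfl (by omega),
      mul_single_lo m σ a 0 (by omega) a w k k (by omega),
      mul_single_lo m σ a 1 (by omega) 1 _ k ⟨(k : ℕ) - 1, by omega⟩ (by simp only [Fin.val_mk]; omega),
      mul_single_hi m σ a (m - 1) (by omega) 1 w ⟨(k : ℕ) - 1, by omega⟩ k (by simp only [Fin.val_mk]; omega),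
      map_one, map_one, mul_one, mul_one] at h
    simpa using h
  have hA' : a = (σ ^ (k : ℕ)) a := by
    have := mul_left_cancel₀ hwk hA
    simpa using this
  have hB' : (σ ^ ((k : ℕ) - 1)) a = (σ ^ (k : ℕ)) a := mul_left_cancel₀ hwk hB
  apply ha
  apply (σ ^ ((k : ℕ) - 1)).injective
  have hs : (σ ^ ((k : ℕ) - 1)) (σ a) = (σ ^ (k : ℕ)) a := by
    rw [show (k : ℕ) = ((k : ℕ) - 1) + 1 from by omega, pow_succ]
    rfl
  rw [hs, ← hB']

lemma fixed_mem_range [IsGalois F K] [FiniteDimensional F K]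
    (hgen : ∀ τ : K ≃ₐ[F] K, τ ∈ Subgroup.zpowers σ) (c : K) (hc : σ c = c) :
    c ∈ Set.range (algebraMap F K) := by
  have hall : ∀ τ : K ≃ₐ[F] K, τ c = c := by
    intro τ
    have h1 : σ ∈ MulAction.stabilizer (K ≃ₐ[F] K) c := hc
    exact Subgroup.zpowers_le.mpr h1 (hgen τ)
  have hfix : c ∈ IntermediateField.fixedField (⊤ : Subgroup (K ≃ₐ[F] K)) := fun g => hall g
  have htop : IntermediateField.fixedField (⊤ : Subgroup (K ≃ₐ[F] K)) = ⊥ :=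
    OrderIso.map_bot (IsGalois.intermediateFieldEquivSubgroup (F := F) (E := K)).symm
  rw [htop] at hfix
  exact IntermediateField.mem_bot.mp hfix

lemma hilbert90_cyclic [FiniteDimensional F K] (hm : 0 < m) (hord : orderOf σ = m)
    (hσm : σ ^ m = 1) (k : K) (hk : k ≠ 0)
    (hnorm : ∏ l ∈ Finset.range m, (σ ^ l) k = 1) :
    ∃ c : K, c ≠ 0 ∧ k = c⁻¹ * σ c := by
  set U : ℕ → K := fun n => ∏ l ∈ Finset.range n, (σ ^ l) k with hU
  have hinj2 : Function.Injective (fun i : Fin m => ((σ ^ (i : ℕ) : K ≃ₐ[F] K) : K →* K)) := by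
    intro i j h
    have h2 : (σ ^ (i : ℕ) : K ≃ₐ[F] K) = σ ^ (j : ℕ) := by
      ext x; exact DFunLike.ext_iff.1 h x
    have h3 : (i : ℕ) % orderOf σ = (j : ℕ) % orderOf σ := pow_eq_pow_iff_modEq.mp h2
    rw [hord, Nat.mod_eq_of_lt i.isLt, Nat.mod_eq_of_lt j.isLt] at h3
    exact Fin.ext h3
  have hli : LinearIndependent K fun i : Fin m => (((σ ^ (i : ℕ) : K ≃ₐ[F] K) : K →* K) : K → K) :=
    (linearIndependent_monoidHom K K).comp _ hinj2
  have hex : ∃ z : K, ∑ i : Fin m, U (i : ℕ) * (σ ^ (i : ℕ)) z ≠ 0 := by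
    by_contra hz
    push_neg at hz
    have h0 : (∑ i : Fin m, U (i : ℕ) • (((σ ^ (i : ℕ) : K ≃ₐ[F] K) : K →* K) : K → K)) = 0 := by
      funext z
      simpa [smul_eq_mul] using hz z
    have := Fintype.linearIndependent_iff.mp hli (fun i => U (i : ℕ)) h0 ⟨0, hm⟩
    simp [hU] at this
  obtain ⟨z, hb⟩ := hex
  set b : K := ∑ i : Fin m, U (i : ℕ) * (σ ^ (i : ℕ)) z with hbdef
  have hUsucc : ∀ n : ℕ, k * σ (U n) = U (n + 1) := by
    intro n
    rw [hU]
    simp only [map_prod]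
    rw [Finset.prod_range_succ']
    simp only [pow_zero, AlgEquiv.one_apply]
    rw [mul_comm]
    congr 1
    apply Finset.prod_congr rfl
    intro l _
    rw [pow_succ']
    rfl
  have hkey : k * σ b = b := by
    have hsb : σ b = ∑ i ∈ Finset.range m, σ (U i) * (σ ^ (i + 1)) z := by
      rw [hbdef, ← Fin.sum_univ_eq_sum_range (fun i => σ (U i) * (σ ^ (i + 1)) z), map_sum]
      apply Finset.sum_congr rfl
      intro i _
      rw [map_mul]
      congr 1
      rw [pow_succ']
      rfl
    have hb' : b = ∑ i ∈ Finset.range m, U i * (σ ^ i) z :=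
      Fin.sum_univ_eq_sum_range (fun i => U i * (σ ^ i) z) m
    rw [hsb, Finset.mul_sum, hb']
    have e1 : ∀ i, k * (σ (U i) * (σ ^ (i + 1)) z) = U (i + 1) * (σ ^ (i + 1)) z := by
      intro i; rw [← mul_assoc, hUsucc]
    simp only [e1]
    have e2 := Finset.sum_range_succ' (fun i => U i * (σ ^ i) z) m
    have e3 := Finset.sum_range_succ (fun i => U i * (σ ^ i) z) m
    have e4 : U m * (σ ^ m) z = U 0 * (σ ^ (0 : ℕ)) z := by
      rw [hσm]
      simp only [hU, hnorm, AlgEquiv.one_apply, pow_zero, Finset.range_zero, Finset.prod_empty]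
    have := e2.symm.trans e3
    simp only [pow_zero, AlgEquiv.one_apply] at this e4
    rw [e4] at this
    exact add_right_cancel this
  have hσb : σ b ≠ 0 := fun h0 => hb (by simpa using σ.injective (h0.trans (map_zero σ).symm))
  refine ⟨b⁻¹, inv_ne_zero hb, ?_⟩
  rw [inv_inv, map_inv₀, eq_comm, mul_inv_eq_iff_eq_mul₀ hσb]
  exact hkey.symm

lemma G_comp (c d : K) : cycG m σ c ∘ cycG m σ d = cycG m σ (c * d) := by
  funext z i
  simp only [Function.comp_apply, cycG, map_mul, mul_inv]
  ring

lemma G_one : cycG m σ 1 = id := by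
  funext u i
  simp [cycG]

lemma emb_mul_emb (hm : 0 < m) (x y : K) :
    cycMul m σ a (cycEmb K m x) (cycEmb K m y) = cycEmb K m (x * y) := by
  funext k
  exact (congrFun (emb_mul m σ a x (cycEmb K m y) hm) k).trans
    (by simp [cycEmb, mul_ite])

lemma G_formula (hm : 0 < m) (c : K) (z : Fin m → K) :
    cycG m σ c z = cycMul m σ a (cycMul m σ a (cycEmb K m c⁻¹) z) (cycEmb K m c) := by
  have h1 : cycMul m σ a (cycEmb K m c⁻¹) z = fun k => c⁻¹ * z k := emb_mul m σ a c⁻¹ z hm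
  rw [h1]
  funext k
  have h2 : cycMul m σ a (fun k => c⁻¹ * z k) (cycEmb K m c) k
      = (c⁻¹ * z k) * (σ ^ (k : ℕ)) c :=
    mul_single_lo m σ a 0 hm c (fun k => c⁻¹ * z k) k k (by omega)
  rw [h2]
  simp only [cycG]
  ring

end CycAux
end Helpers

/-- For `a ∈ K∖F` and `A = (K/F,σ,a)`:
(i) every `G_c` (`c ∈ K^×`) is an `F`-automorphism of `A` and `G_c(z) = (c⁻¹ ∘ z) ∘ c`;
(ii) `G_c = G_d ↔ c⁻¹σ(c) = d⁻¹σ(d)`;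
(iii) `N = {G_c : c ∈ K^×}` is an abelian normal subgroup of `Aut_F(A)` isomorphic to
`ker(N_{K/F})` (the isomorphism being `k ↦ H_{id,k}`);
(iv) `G_c ≠ id` for `c ∈ K∖F`, so `Aut_F(A)` is nontrivial. -/
theorem stmt1 {F K : Type*} [Field F] [Field K] [Algebra F K]
    (m : ℕ) (hm : 2 ≤ m) [IsGalois F K] [FiniteDimensional F K]
    (hrank : Module.finrank F K = m)
    (σ : K ≃ₐ[F] K) (hgen : ∀ τ : K ≃ₐ[F] K, τ ∈ Subgroup.zpowers σ)
    (a : K) (ha : a ∉ Set.range (algebraMap F K)) :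
    -- (i)
    (∀ c : K, c ≠ 0 →
      IsCycAut m σ a (cycG m σ c) ∧
        ∀ z : Fin m → K,
          cycG m σ c z = cycMul m σ a (cycMul m σ a (cycEmb K m c⁻¹) z) (cycEmb K m c)) ∧
    -- (ii)
    (∀ c d : K, c ≠ 0 → d ≠ 0 → (cycG m σ c = cycG m σ d ↔ c⁻¹ * σ c = d⁻¹ * σ d)) ∧
    -- (iii): N is closed under composition and abelian ...
    (∀ c d : K, c ≠ 0 → d ≠ 0 →
      cycG m σ c ∘ cycG m σ d = cycG m σ (c * d) ∧
        cycG m σ c ∘ cycG m σ d = cycG m σ d ∘ cycG m σ c) ∧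
    -- ... normal in Aut_F(A) ...
    (∀ H H' : (Fin m → K) → (Fin m → K), IsCycAut m σ a H → H ∘ H' = id → H' ∘ H = id →
      ∀ c : K, c ≠ 0 → ∃ d : K, d ≠ 0 ∧ H ∘ cycG m σ c ∘ H' = cycG m σ d) ∧
    -- ... and `k ↦ H_{id,k}` is a multiplicative bijection from `ker N_{K/F}` onto `N`
    (∀ k : K, k ≠ 0 → cycNorm m σ k = 1 → ∃ c : K, c ≠ 0 ∧ cycH m σ 1 k = cycG m σ c) ∧
    (∀ c : K, c ≠ 0 → ∃ k : K, k ≠ 0 ∧ cycNorm m σ k = 1 ∧ cycH m σ 1 k = cycG m σ c) ∧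
    (∀ k k' : K, k ≠ 0 → k' ≠ 0 → cycNorm m σ k = 1 → cycNorm m σ k' = 1 →
      cycH m σ 1 k = cycH m σ 1 k' → k = k') ∧
    (∀ k k' : K, k ≠ 0 → k' ≠ 0 → cycNorm m σ k = 1 → cycNorm m σ k' = 1 →
      cycH m σ 1 (k * k') = cycH m σ 1 k ∘ cycH m σ 1 k') ∧
    -- (iv)
    (∀ c : K, c ∉ Set.range (algebraMap F K) → cycG m σ c ≠ id) := by
  have h0m : 0 < m := by omega
  have hcard : Fintype.card (K ≃ₐ[F] K) = m := by
    rw [← Nat.card_eq_fintype_card, IsGalois.card_aut_eq_finrank, hrank]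
  have hσm : σ ^ m = 1 := by rw [← hcard]; exact pow_card_eq_one
  have hord : orderOf σ = m := by
    rw [orderOf_eq_card_of_forall_mem_zpowers hgen, Nat.card_eq_fintype_card, hcard]
  have haσ : σ a ≠ a := fun h => ha (CycAux.fixed_mem_range σ hgen a h)
  have hσne : ∀ (x : K), x ≠ 0 → σ x ≠ 0 := fun x hx h0 =>
    hx (by simpa using σ.injective (h0.trans (map_zero σ).symm))
  have hGaut : ∀ c : K, c ≠ 0 → IsCycAut m σ a (cycG m σ c) := by
    intro c hc
    refine ⟨?_, ?_, ?_, ?_, ?_⟩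
    · refine Function.bijective_iff_has_inverse.mpr ⟨cycG m σ c⁻¹, ?_, ?_⟩
      · intro u
        have h1 := congrFun (CycAux.G_comp m σ c⁻¹ c) u
        simp only [Function.comp_apply] at h1
        rw [h1, inv_mul_cancel₀ hc, CycAux.G_one]
        rfl
      · intro u
        have h1 := congrFun (CycAux.G_comp m σ c c⁻¹) u
        simp only [Function.comp_apply] at h1
        rw [h1, mul_inv_cancel₀ hc, CycAux.G_one]
        rfl
    · intro u v; funext i; simp only [cycG, Pi.add_apply]; ring
    · intro r u; funext i; simp only [cycG, Pi.smul_apply, smul_mul_assoc]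
    · funext i
      by_cases h : (i : ℕ) = 0
      · simp [cycG, cycOne, h, inv_mul_cancel₀ hc]
      · simp [cycG, cycOne, h]
    · intro u v; exact (CycAux.G_mul m σ a hσm c hc u v).symm
  refine ⟨?_, ?_, ?_, ?_, ?_, ?_, ?_, ?_, ?_⟩
  · -- (i)
    intro c hc
    exact ⟨hGaut c hc, fun z => CycAux.G_formula m σ a h0m c z⟩
  · -- (ii)
    intro c d hc hd
    constructor
    · intro hEq
      have h1 := congrFun (congrFun hEq (fun _ => (1 : K))) ⟨1, by omega⟩
      simpa [cycG] using h1
    · intro hcd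
      funext u i
      have e : c⁻¹ * (σ ^ (i : ℕ)) c = d⁻¹ * (σ ^ (i : ℕ)) d := by
        rw [← CycAux.ratio σ c hc (i : ℕ), ← CycAux.ratio σ d hd (i : ℕ), hcd]
      simp only [cycG, mul_assoc, e]
  · -- (iii) composition and abelian
    intro c d hc hd
    refine ⟨CycAux.G_comp m σ c d, ?_⟩
    rw [CycAux.G_comp, CycAux.G_comp, mul_comm]
  · -- (iii) normality
    intro H H' hAut hHH' hH'H c hc
    obtain ⟨hbij, hadd, hsmul, hone, hmul⟩ := hAut
    have hsurj : Function.Surjective H := fun y => ⟨H' y, congrFun hHH' y⟩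
    have hassoc : ∀ (x : K) (u v : Fin m → K),
        cycMul m σ a (cycMul m σ a (H (cycEmb K m x)) u) v
          = cycMul m σ a (H (cycEmb K m x)) (cycMul m σ a u v) := by
      intro x u v
      obtain ⟨u', rfl⟩ := hsurj u
      obtain ⟨v', rfl⟩ := hsurj v
      have e1 : cycMul m σ a (cycEmb K m x) u' = fun k => x * u' k :=
        CycAux.emb_mul m σ a x u' h0m
      have e2 : cycMul m σ a (cycEmb K m x) (cycMul m σ a u' v')
          = fun k => x * (cycMul m σ a u' v') k := CycAux.emb_mul m σ a x _ h0m
      have e3 : cycMul m σ a (fun k => x * u' k) v'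
          = fun k => x * (cycMul m σ a u' v') k := CycAux.smul_mul m σ a x u' v'
      rw [← hmul (cycEmb K m x) u', ← hmul (cycMul m σ a (cycEmb K m x) u') v',
        ← hmul u' v', ← hmul (cycEmb K m x) (cycMul m σ a u' v')]
      congr 1
      rw [e1, e3, e2]
    have hwzero : ∀ (x : K) (j : Fin m), (j : ℕ) ≠ 0 → H (cycEmb K m x) j = 0 := fun x j hj =>
      CycAux.nucleus_coord m σ a hm haσ (H (cycEmb K m x)) (hassoc x) j hj
    set τ : K → K := fun x => H (cycEmb K m x) ⟨0, h0m⟩ with hτ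
    have hembH : ∀ x : K, H (cycEmb K m x) = cycEmb K m (τ x) := by
      intro x
      funext j
      by_cases hj : (j : ℕ) = 0
      · have hj' : j = ⟨0, h0m⟩ := Fin.ext hj
        rw [hj', hτ]
        simp [cycEmb]
      · rw [hwzero x j hj]
        simp [cycEmb, hj]
    have hτmul : ∀ x y : K, τ (x * y) = τ x * τ y := by
      intro x y
      have h2 : cycEmb K m (τ (x * y)) = cycEmb K m (τ x * τ y) := by
        rw [← hembH, ← CycAux.emb_mul_emb m σ a h0m x y, hmul, hembH, hembH,
          CycAux.emb_mul_emb m σ a h0m (τ x) (τ y)]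
      have h3 := congrFun h2 ⟨0, h0m⟩
      simpa [cycEmb] using h3
    have hτ1 : τ 1 = 1 := by
      have e : cycEmb K m (1 : K) = cycOne K m := rfl
      show H (cycEmb K m 1) ⟨0, h0m⟩ = 1
      rw [e, hone]
      simp [cycOne]
    have hmulinv : τ c * τ c⁻¹ = 1 := by rw [← hτmul, mul_inv_cancel₀ hc, hτ1]
    have hτc0 : τ c ≠ 0 := left_ne_zero_of_mul_eq_one hmulinv
    have hτinv : τ c⁻¹ = (τ c)⁻¹ := (inv_eq_of_mul_eq_one_right hmulinv).symm
    refine ⟨τ c, hτc0, ?_⟩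
    funext z
    show H (cycG m σ c (H' z)) = cycG m σ (τ c) z
    have hz : H (H' z) = z := congrFun hHH' z
    rw [CycAux.G_formula m σ a h0m c (H' z), hmul, hmul, hembH, hembH, hτinv, hz,
      ← CycAux.G_formula m σ a h0m (τ c) z]
  · -- (iii) k ↦ H_{1,k} hits G's
    intro k hk hnorm
    obtain ⟨c, hc, hkc⟩ := CycAux.hilbert90_cyclic m σ h0m hord hσm k hk hnorm
    refine ⟨c, hc, ?_⟩
    funext u i
    simp only [cycH, cycG, AlgEquiv.one_apply]
    rw [hkc, CycAux.ratio σ c hc, mul_assoc]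
  · -- (iii) every G_c comes from some k
    intro c hc
    refine ⟨c⁻¹ * σ c, mul_ne_zero (inv_ne_zero hc) (hσne c hc), ?_, ?_⟩
    · show ∏ l ∈ Finset.range m, (σ ^ l) (c⁻¹ * σ c) = 1
      rw [CycAux.ratio σ c hc m, hσm]
      simp [inv_mul_cancel₀ hc]
    · funext u i
      simp only [cycH, cycG, AlgEquiv.one_apply]
      rw [CycAux.ratio σ c hc, mul_assoc]
  · -- (iii) injectivity
    intro k k' hk hk' hn hn' hEq
    have h1 := congrFun (congrFun hEq (fun _ => (1 : K))) ⟨1, by omega⟩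
    simpa [cycH] using h1
  · -- (iii) multiplicativity
    intro k k' hk hk' hn hn'
    funext u i
    simp only [cycH, Function.comp_apply, AlgEquiv.one_apply, map_mul,
      Finset.prod_mul_distrib]
    ring
  · -- (iv)
    intro c hcr hid
    have hc : c ≠ 0 := fun h => hcr ⟨0, by rw [map_zero, h]⟩
    have h1 := congrFun (congrFun hid (fun _ => (1 : K))) ⟨1, by omega⟩
    simp only [cycG, id_eq, one_mul, pow_one] at h1
    have h2 : σ c = c := ((inv_mul_eq_one₀ hc).mp h1).symm
    exact hcr (CycAux.fixed_mem_range σ hgen c h2)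
end

section
/- Let a ∈ K∖F and A = (K/F,σ,a) be the nonassociative quaternion algebra. Then the inner F-automorphisms of A are exactly the maps G_c for c ∈ K^×; that is, an F-automorphism H of A is inner if and only if there exists c ∈ K^× with H(x,y) = (x, y c^{−1}σ(c)) for all (x,y) ∈ A. -/
open Finset

section

variable {F K : Type*} [Field F] [Field K] [Algebra F K]

/-- Multiplication of the nonassociative quaternion algebra `(K/F, σ, a)` on `K × K`:
`(x,y) ∘ (u,v) = (xu + yσ(v)a, xv + yσ(u))`. -/
def qMul (σ : K ≃ₐ[F] K) (a : K) (p r : K × K) : K × K :=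
  (p.1 * r.1 + p.2 * σ r.2 * a, p.1 * r.2 + p.2 * σ r.1)

/-- `H` is an `F`-automorphism of the nonassociative quaternion algebra `(K/F, σ, a)`. -/
def IsQuatAut (σ : K ≃ₐ[F] K) (a : K) (H : K × K → K × K) : Prop :=
  Function.Bijective H ∧
    (∀ u v, H (u + v) = H u + H v) ∧
    (∀ (c : F) (u : K × K), H (c • u) = c • H u) ∧
    H (1, 0) = (1, 0) ∧
    ∀ u v, H (qMul σ a u v) = qMul σ a (H u) (H v)

/-- `H` is an inner `F`-automorphism of `(K/F, σ, a)`: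
`H(z) = (w_l ∘ z) ∘ w` for some `w ≠ 0` with left inverse `w_l`. -/
def IsQuatInner (σ : K ≃ₐ[F] K) (a : K) (H : K × K → K × K) : Prop :=
  ∃ w wl : K × K, w ≠ 0 ∧ qMul σ a wl w = (1, 0) ∧
    ∀ z, H z = qMul σ a (qMul σ a wl z) w

end

/-- Let `a ∈ K∖F` and `A = (K/F,σ,a)` be a nonassociative quaternion
algebra (`char F ≠ 2`, `K/F` quadratic separable with nontrivial automorphism `σ`). Then
the inner `F`-automorphisms of `A` are exactly the maps `G_c : (x,y) ↦ (x, y c⁻¹σ(c))`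
for `c ∈ K^×`. -/
theorem stmt5 {F K : Type*} [Field F] [Field K] [Algebra F K]
    (hchar : ringChar F ≠ 2) [FiniteDimensional F K]
    (hrank : Module.finrank F K = 2) [Algebra.IsSeparable F K]
    (σ : K ≃ₐ[F] K) (hσ : σ ≠ AlgEquiv.refl)
    (a : K) (ha : a ∉ Set.range (algebraMap F K)) :
    -- each `G_c` is an inner `F`-automorphism of `A`
    (∀ c : K, c ≠ 0 →
      IsQuatAut σ a (fun p : K × K => (p.1, p.2 * (c⁻¹ * σ c))) ∧
        IsQuatInner σ a (fun p : K × K => (p.1, p.2 * (c⁻¹ * σ c)))) ∧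
    -- and conversely an `F`-automorphism is inner iff it is some `G_c`
    (∀ H : K × K → K × K, IsQuatAut σ a H →
      (IsQuatInner σ a H ↔
        ∃ c : K, c ≠ 0 ∧ H = fun p : K × K => (p.1, p.2 * (c⁻¹ * σ c)))) := by
  have ha0 : a ≠ 0 := fun h => ha ⟨0, by simp [h]⟩
  -- `{1, a}` is an `F`-basis of `K`
  have hli : LinearIndependent F ![(1 : K), a] := by
    rw [LinearIndependent.pair_iff' (one_ne_zero)]
    intro r hr
    exact ha ⟨r, by simpa [Algebra.smul_def] using hr⟩
  have hspan : ∀ y : K, ∃ α β : F,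
      y = algebraMap F K α + algebraMap F K β * a := by
    intro y
    have hcard : Fintype.card (Fin 2) = Module.finrank F K := by simp [hrank]
    let b := basisOfLinearIndependentOfCardEqFinrank hli hcard
    have hb : ⇑b = ![(1 : K), a] :=
      coe_basisOfLinearIndependentOfCardEqFinrank hli hcard
    refine ⟨b.repr y 0, b.repr y 1, ?_⟩
    have hy := b.sum_repr y
    rw [Fin.sum_univ_two] at hy
    conv_lhs => rw [← hy]
    simp [hb, Algebra.smul_def]
  -- `σ a ≠ a`
  have hfix : σ a ≠ a := by
    intro h
    apply hσ
    ext x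
    obtain ⟨α, β, rfl⟩ := hspan x
    simp [map_add, map_mul, AlgEquiv.commutes, h]
  have hsub : a - σ a ≠ 0 := sub_ne_zero_of_ne (Ne.symm hfix)
  -- `σ` is an involution
  have hs2 : ∀ x : K, σ (σ x) = x := by
    obtain ⟨α, β, hq⟩ := hspan (a * a)
    have h1 : σ a * σ a = algebraMap F K α + algebraMap F K β * σ a := by
      have h := congrArg σ hq
      simp only [map_add, map_mul, AlgEquiv.commutes] at h
      linear_combination h
    have hz : (a - σ a) * (a + σ a - algebraMap F K β) = 0 := by
      linear_combination hq - h1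
    have hsum : a + σ a = algebraMap F K β := by
      rcases mul_eq_zero.mp hz with h | h
      · exact absurd h hsub
      · linear_combination h
    have hsa : σ (σ a) = a := by
      have h := congrArg σ hsum
      simp only [map_add, AlgEquiv.commutes] at h
      linear_combination h - hsum
    intro x
    obtain ⟨α, β, rfl⟩ := hspan x
    simp [map_add, map_mul, AlgEquiv.commutes, hsa]
  -- the maps G_c are inner automorphisms
  have hGinner : ∀ c : K, c ≠ 0 →
      IsQuatInner σ a (fun p : K × K => (p.1, p.2 * (c⁻¹ * σ c))) := by
    intro c hc
    have hsc : σ c ≠ 0 := fun h => hc (σ.injective (by rw [map_zero]; exact h))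
    refine ⟨(c, 0), (c⁻¹, 0), ?_, ?_, ?_⟩
    · simp [Prod.ext_iff, hc]
    · simp only [qMul, map_zero, mul_zero, zero_mul, add_zero, zero_add, Prod.mk.injEq]
      field_simp
      exact ⟨trivial, trivial⟩
    · intro z
      simp only [qMul, map_zero, mul_zero, zero_mul, add_zero, zero_add, Prod.mk.injEq]
      refine ⟨by field_simp, by field_simp⟩
  have hGaut : ∀ c : K, c ≠ 0 →
      IsQuatAut σ a (fun p : K × K => (p.1, p.2 * (c⁻¹ * σ c))) := by
    intro c hc
    have hsc : σ c ≠ 0 := fun h => hc (σ.injective (by rw [map_zero]; exact h))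
    have htt : (c⁻¹ * σ c) * ((σ c)⁻¹ * c) = 1 := by field_simp
    refine ⟨?_, ?_, ?_, ?_, ?_⟩
    · refine Function.bijective_iff_has_inverse.mpr
        ⟨fun p => (p.1, p.2 * ((σ c)⁻¹ * c)), fun p => ?_, fun p => ?_⟩
      · obtain ⟨x, y⟩ := p
        simp only [Prod.mk.injEq]
        exact ⟨by trivial, by field_simp⟩
      · obtain ⟨x, y⟩ := p
        simp only [Prod.mk.injEq]
        exact ⟨by trivial, by field_simp⟩
    · intro u v
      simp [Prod.ext_iff, add_mul]
    · intro r u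
      simp [Prod.ext_iff, Prod.smul_def, smul_mul_assoc]
    · simp
    · intro u v
      simp only [qMul, map_add, map_mul, map_inv₀, hs2, Prod.mk.injEq]
      refine ⟨?_, by ring⟩
      linear_combination (-(u.2 * σ v.2 * a)) * htt
  refine ⟨fun c hc => ⟨hGaut c hc, hGinner c hc⟩, fun H hAut => ?_⟩
  obtain ⟨hbij, hadd, hsmul, hone, hmul⟩ := hAut
  constructor
  · rintro ⟨w, wl, hw0, hinv, hH⟩
    obtain ⟨c, d⟩ := w
    obtain ⟨p, q⟩ := wl
    simp only [qMul, Prod.mk.injEq] at hinv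
    obtain ⟨hE1, hE2⟩ := hinv
    by_cases hd : d = 0
    · -- good case : `w = (c, 0)`, `H = G_c`
      subst hd
      have hc : c ≠ 0 := by
        rintro rfl
        exact hw0 (by simp [Prod.ext_iff])
      have hsc : σ c ≠ 0 := fun h => hc (σ.injective (by rw [map_zero]; exact h))
      have hq : q = 0 := by
        have h2 : q * σ c = 0 := by linear_combination hE2
        exact (mul_eq_zero.mp h2).resolve_right hsc
      subst hq
      have hpc : p * c = 1 := by
        simp only [map_zero, mul_zero, zero_mul, add_zero] at hE1
        linear_combination hE1
      refine ⟨c, hc, ?_⟩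
      funext z
      rw [hH z]
      simp only [qMul, map_zero, mul_zero, zero_mul, add_zero, zero_add, Prod.mk.injEq]
      constructor
      · linear_combination z.1 * hpc
      · field_simp
        linear_combination z.2 * hpc
    · -- `d ≠ 0`
      exfalso
      have hsd : σ d ≠ 0 := fun h => hd (σ.injective (by rw [map_zero]; exact h))
      by_cases hp : p = 0
      · -- impossible : leads to `σ a = a`
        subst hp
        have hq : q ≠ 0 := by
          intro h
          subst h
          simp at hE1
        have hc : c = 0 := by
          have h2 : q * σ c = 0 := by linear_combination hE2
          have := (mul_eq_zero.mp h2).resolve_left hq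
          exact σ.injective (by rw [map_zero]; exact this)
        subst hc
        have hE1' : q * σ d * a = 1 := by
          simp only [zero_mul, zero_add] at hE1
          linear_combination hE1
        have hE1s' : σ q * d * σ a = 1 := by
          have h := congrArg σ hE1'
          simp only [map_mul, map_one, hs2] at h
          linear_combination h
        have hM := hmul (0, 1) (0, 1)
        simp only [hH] at hM
        simp only [qMul, map_add, map_mul, map_zero, map_one, mul_zero, zero_mul,
          add_zero, zero_add, mul_one, one_mul, hs2, Prod.mk.injEq] at hM
        obtain ⟨hM1, -⟩ := hM
        exact hfix (by linear_combination hM1 + (a * σ q * d * σ a - σ a) * hE1' + a * hE1s')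
      · -- impossible : `p ≠ 0` and `d ≠ 0`
        have hsp : σ p ≠ 0 := fun h => hp (σ.injective (by rw [map_zero]; exact h))
        have hE1s : σ p * σ c + σ q * d * σ a = 1 := by
          have h := congrArg σ hE1
          simp only [map_add, map_mul, map_one, hs2] at h
          linear_combination h
        have hE2s : σ p * σ d + σ q * c = 0 := by
          have h := congrArg σ hE2
          simp only [map_add, map_mul, map_zero, hs2] at h
          linear_combination h
        have hS := hmul (a, 0) (a, 0)
        simp only [hH] at hS
        simp only [qMul, map_add, map_mul, map_zero, map_one, mul_zero, zero_mul,
          add_zero, zero_add, mul_one, one_mul, hs2, Prod.mk.injEq] at hS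
        obtain ⟨hF2, hS2⟩ := hS
        have hT1 : p * d * (a - σ a) ^ 2 * (p * c - σ p * σ c) = 0 := by
          linear_combination (-1 : K) * hS2
            + (-(σ a * a) - σ a * (p * c - σ p * σ c) * (a - σ a)) * hE2
            + (-(a * (p * d * (a - σ a) + (p * d + q * σ c) * σ a))) * hE1s
            + (-(σ a * (p * d * (a - σ a) + (p * d + q * σ c) * σ a))) * hE1
        have hnz1 : p * d * (a - σ a) ^ 2 ≠ 0 :=
          mul_ne_zero (mul_ne_zero hp hd) (pow_ne_zero 2 hsub)
        have hA : p * c - σ p * σ c = 0 := (mul_eq_zero.mp hT1).resolve_left hnz1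
        have hQ0 : (p * c * (1 - p * c) + p * d * (σ p * σ d) * a) * (a - σ a) ^ 2 = 0 := by
          linear_combination hF2
            + (-(σ a * (σ a - 2 * (p * c * a + (1 - p * c) * σ a)
                - (p * c + q * σ d * a - 1) * σ a))) * hE1
            + (a ^ 2 * p * d * (a - σ a) + a ^ 2 * σ a * (p * d + q * σ c)) * hE2s
            + (-(a * σ a * σ p * σ d * (a - σ a))) * hE2
        have hQ : p * c * (1 - p * c) + p * d * (σ p * σ d) * a = 0 :=
          (mul_eq_zero.mp hQ0).resolve_right (pow_ne_zero 2 hsub)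
        have h3 : σ p * σ c * (1 - σ p * σ c) + σ p * σ d * (p * d) * σ a = 0 := by
          have h := congrArg σ hQ
          simp only [map_add, map_mul, map_sub, map_one, map_zero, hs2] at h
          linear_combination h
        have hfin : p * d * σ p * σ d * (a - σ a) = 0 := by
          linear_combination hQ - h3 - (1 - p * c - σ p * σ c) * hA
        exact (mul_ne_zero (mul_ne_zero (mul_ne_zero (mul_ne_zero hp hd) hsp) hsd) hsub) hfin
  · rintro ⟨c, hc, rfl⟩
    exact hGinner c hc
end

section
/- Let a, b ∈ K∖F. The nonassociative cyclic algebras (K/F,σ,a) and (K/F,σ,b) are isomorphic as F-algebras if and only if there exist j ∈ {0,…,m−1} and k ∈ K^× such that σ^j(a) = N_{K/F}(k)·b. -/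
open Finset

section

variable {F K : Type*} [Field F] [Field K] [Algebra F K]

/-- `φ` is an isomorphism of `F`-algebras from `(K/F,σ,a)` to `(K/F,σ,b)`. -/
def IsCycIso (m : ℕ) (σ : K ≃ₐ[F] K) (a b : K) (φ : (Fin m → K) → (Fin m → K)) : Prop :=
  Function.Bijective φ ∧
    (∀ u v, φ (u + v) = φ u + φ v) ∧
    (∀ (c : F) (u : Fin m → K), φ (c • u) = c • φ u) ∧
    φ (cycOne K m) = cycOne K m ∧
    ∀ u v, φ (cycMul m σ a u v) = cycMul m σ b (φ u) (φ v)

end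


namespace Stmt10Aux

/-- single monomial `y t^s` -/
def sgl {K : Type*} [Zero K] (m : ℕ) (s : Fin m) (y : K) : Fin m → K :=
  fun i => if i = s then y else 0

variable {F K : Type*} [Field F] [Field K] [Algebra F K]

variable {m : ℕ} (σ : K ≃ₐ[F] K) (a : K)

theorem double_sum_collapse_right (c : ℕ) (f : Fin m → Fin m → K) (s : Fin m)
    (hf : ∀ i j, j ≠ s → f i j = 0) :
    (∑ i : Fin m, ∑ j : Fin m, if (i : ℕ) + (j : ℕ) = c then f i j else 0)
      = if h : c - (s : ℕ) < m ∧ (s : ℕ) ≤ c then f ⟨c - (s : ℕ), h.1⟩ s else 0 := by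
  have h1 : ∀ i : Fin m, (∑ j : Fin m, if (i : ℕ) + (j : ℕ) = c then f i j else 0)
      = if (i : ℕ) + (s : ℕ) = c then f i s else 0 := by
    intro i
    apply Finset.sum_eq_single_of_mem s (mem_univ s)
    intro j _ hj
    simp [hf i j hj]
  simp only [h1]
  by_cases h : c - (s : ℕ) < m ∧ (s : ℕ) ≤ c
  · rw [dif_pos h]
    have : (⟨c - (s : ℕ), h.1⟩ : Fin m) ∈ univ := mem_univ _
    rw [Finset.sum_eq_single_of_mem _ this, if_pos (by simp; omega)]
    intro i _ hi
    rw [if_neg]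
    intro hc
    exact hi (Fin.ext (by simp; omega))
  · rw [dif_neg h]
    apply Finset.sum_eq_zero
    intro i _
    rw [if_neg]
    have := i.isLt
    omega

theorem double_sum_collapse_left (c : ℕ) (f : Fin m → Fin m → K) (s : Fin m)
    (hf : ∀ i j, i ≠ s → f i j = 0) :
    (∑ i : Fin m, ∑ j : Fin m, if (i : ℕ) + (j : ℕ) = c then f i j else 0)
      = if h : c - (s : ℕ) < m ∧ (s : ℕ) ≤ c then f s ⟨c - (s : ℕ), h.1⟩ else 0 := by
  have h1 : ∀ i : Fin m, i ≠ s → (∑ j : Fin m, if (i : ℕ) + (j : ℕ) = c then f i j else 0) = 0 := by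
    intro i hi
    apply Finset.sum_eq_zero
    intro j _
    simp [hf i j hi]
  rw [Finset.sum_eq_single_of_mem s (mem_univ s) (fun i _ hi => h1 i hi)]
  by_cases h : c - (s : ℕ) < m ∧ (s : ℕ) ≤ c
  · rw [dif_pos h]
    have : (⟨c - (s : ℕ), h.1⟩ : Fin m) ∈ univ := mem_univ _
    rw [Finset.sum_eq_single_of_mem _ this, if_pos (by simp; omega)]
    intro j _ hj
    rw [if_neg]
    intro hc
    exact hj (Fin.ext (by simp; omega))
  · rw [dif_neg h]
    apply Finset.sum_eq_zero
    intro j _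
    rw [if_neg]
    have := j.isLt
    omega

theorem cycMul_sgl_right (u : Fin m → K) (s : Fin m) (y : K) (r : Fin m) :
    cycMul m σ a u (sgl m s y) r
      = (if h : (r : ℕ) - (s : ℕ) < m ∧ (s : ℕ) ≤ (r : ℕ) then
          u ⟨(r : ℕ) - (s : ℕ), h.1⟩ * (σ ^ ((r : ℕ) - (s : ℕ))) y else 0)
      + (if h : (r : ℕ) + m - (s : ℕ) < m ∧ (s : ℕ) ≤ (r : ℕ) + m then
          u ⟨(r : ℕ) + m - (s : ℕ), h.1⟩ * (σ ^ ((r : ℕ) + m - (s : ℕ))) y * (σ ^ (r : ℕ)) a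
        else 0) := by
  unfold cycMul
  rw [double_sum_collapse_right (r : ℕ) (fun i j => u i * (σ ^ (i : ℕ)) (sgl m s y j)) s
      (by intro i j hj; simp [sgl, hj]),
    double_sum_collapse_right ((r : ℕ) + m)
      (fun i j => u i * (σ ^ (i : ℕ)) (sgl m s y j) * (σ ^ (r : ℕ)) a) s
      (by intro i j hj; simp [sgl, hj])]
  simp [sgl]

theorem cycMul_sgl_left (s : Fin m) (y : K) (v : Fin m → K) (r : Fin m) :
    cycMul m σ a (sgl m s y) v r
      = (if h : (r : ℕ) - (s : ℕ) < m ∧ (s : ℕ) ≤ (r : ℕ) then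
          y * (σ ^ (s : ℕ)) (v ⟨(r : ℕ) - (s : ℕ), h.1⟩) else 0)
      + (if h : (r : ℕ) + m - (s : ℕ) < m ∧ (s : ℕ) ≤ (r : ℕ) + m then
          y * (σ ^ (s : ℕ)) (v ⟨(r : ℕ) + m - (s : ℕ), h.1⟩) * (σ ^ (r : ℕ)) a
        else 0) := by
  unfold cycMul
  rw [double_sum_collapse_left (r : ℕ) (fun i j => sgl m s y i * (σ ^ (i : ℕ)) (v j)) s
      (by intro i j hi; simp [sgl, hi]),
    double_sum_collapse_left ((r : ℕ) + m)
      (fun i j => sgl m s y i * (σ ^ (i : ℕ)) (v j) * (σ ^ (r : ℕ)) a) s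
      (by intro i j hi; simp [sgl, hi])]
  simp [sgl]

theorem cycEmb_eq_sgl (hm : 0 < m) (x : K) : cycEmb K m x = sgl m ⟨0, hm⟩ x := by
  funext i
  simp [cycEmb, sgl, Fin.ext_iff]

theorem cycMul_cycEmb_left (hm : 0 < m) (x : K) (v : Fin m → K) :
    cycMul m σ a (cycEmb K m x) v = fun r => x * v r := by
  funext r
  rw [cycEmb_eq_sgl hm, cycMul_sgl_left]
  rw [dif_pos ⟨by simp only [Fin.val_mk]; omega, by simp only [Fin.val_mk]; omega⟩,
    dif_neg (by simp only [Fin.val_mk]; omega)]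
  simp

theorem cycMul_cycEmb_right (hm : 0 < m) (u : Fin m → K) (x : K) (r : Fin m) :
    cycMul m σ a u (cycEmb K m x) r = u r * (σ ^ (r : ℕ)) x := by
  rw [cycEmb_eq_sgl hm, cycMul_sgl_right]
  rw [dif_pos ⟨by simp only [Fin.val_mk]; omega, by simp only [Fin.val_mk]; omega⟩,
    dif_neg (by simp only [Fin.val_mk]; omega)]
  simp

theorem cycMul_smul_left (x : K) (u v : Fin m → K) :
    cycMul m σ a (fun i => x * u i) v = fun r => x * cycMul m σ a u v r := by
  funext r
  simp [cycMul, Finset.mul_sum, mul_ite, mul_add, mul_assoc]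

theorem cycEmb_leftNuc (hm : 0 < m) (x : K) (u v : Fin m → K) :
    cycMul m σ a (cycMul m σ a (cycEmb K m x) u) v
      = cycMul m σ a (cycEmb K m x) (cycMul m σ a u v) := by
  rw [cycMul_cycEmb_left σ a hm, cycMul_cycEmb_left σ a hm, cycMul_smul_left]

theorem Tm1_mul_T (hm : 2 ≤ m) :
    cycMul m σ a (sgl m ⟨m-1, by omega⟩ (1:K)) (sgl m ⟨1, by omega⟩ 1) = cycEmb K m a := by
  funext r
  have hrlt := r.isLt
  rw [cycMul_sgl_right]
  by_cases h0 : (r : ℕ) = 0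
  · rw [dif_neg (by simp only [Fin.val_mk]; omega),
      dif_pos ⟨by simp only [Fin.val_mk]; omega, by simp only [Fin.val_mk]; omega⟩]
    simp [sgl, cycEmb, Fin.ext_iff, h0]
  · rw [dif_pos ⟨by simp only [Fin.val_mk]; omega, by simp only [Fin.val_mk]; omega⟩,
      dif_neg (by simp only [Fin.val_mk]; omega)]
    simp only [sgl, cycEmb, map_one, mul_one]
    rw [if_neg (by simp [Fin.ext_iff]; omega), if_neg h0, add_zero]

theorem nucKey (hm : 2 ≤ m) (hσa : σ a ≠ a) (z : Fin m → K)
    (H : cycMul m σ a (cycMul m σ a z (sgl m ⟨m-1, by omega⟩ 1)) (sgl m ⟨1, by omega⟩ 1)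
       = cycMul m σ a z (cycMul m σ a (sgl m ⟨m-1, by omega⟩ 1) (sgl m ⟨1, by omega⟩ 1)))
    (r : Fin m) (hr : (r : ℕ) ≠ 0) : z r = 0 := by
  have hrlt := r.isLt
  have hL : cycMul m σ a (cycMul m σ a z (sgl m ⟨m-1, by omega⟩ 1)) (sgl m ⟨1, by omega⟩ 1) r
      = z r * (σ ^ ((r : ℕ) - 1)) a := by
    rw [cycMul_sgl_right]
    rw [dif_pos ⟨by simp only [Fin.val_mk]; omega, by simp only [Fin.val_mk]; omega⟩,
      dif_neg (by simp only [Fin.val_mk]; omega), cycMul_sgl_right]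
    rw [dif_neg (by simp only [Fin.val_mk]; omega),
      dif_pos ⟨by simp only [Fin.val_mk]; omega, by simp only [Fin.val_mk]; omega⟩]
    have h2 : ((⟨(r:ℕ)-1, by omega⟩ : Fin m) : ℕ) + m - (m-1) = (r : ℕ) := by
      simp only [Fin.val_mk]; omega
    simp only [map_one, mul_one, h2, zero_add, add_zero, Fin.eta]
  have hR : cycMul m σ a z (cycMul m σ a (sgl m ⟨m-1, by omega⟩ 1) (sgl m ⟨1, by omega⟩ 1)) r
      = z r * (σ ^ (r : ℕ)) a := by
    rw [Tm1_mul_T σ a hm, cycMul_cycEmb_right σ a (by omega)]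
  have heq : z r * (σ ^ ((r : ℕ) - 1)) a = z r * (σ ^ (r : ℕ)) a := by
    rw [← hL, ← hR, H]
  by_contra hz
  have := mul_left_cancel₀ hz heq
  have hpow : (σ ^ (r : ℕ)) a = (σ ^ ((r : ℕ) - 1)) (σ a) := by
    rw [← AlgEquiv.mul_apply, ← pow_succ]
    congr 2
    omega
  rw [hpow] at this
  exact hσa ((σ ^ ((r : ℕ) - 1)).injective this).symm

theorem prodP_add (k : K) (i j : ℕ) :
    (∏ l ∈ range (i + j), (σ ^ l) k)
      = (∏ l ∈ range i, (σ ^ l) k) * (σ ^ i) (∏ l ∈ range j, (σ ^ l) k) := by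
  rw [Finset.prod_range_add, map_prod]
  congr 1
  apply Finset.prod_congr rfl
  intro l _
  rw [← AlgEquiv.mul_apply, ← pow_add]

theorem prodP_wrap (hσm : σ ^ m = 1) (k : K) (r : ℕ) :
    (∏ l ∈ range (r + m), (σ ^ l) k) = cycNorm m σ k * ∏ l ∈ range r, (σ ^ l) k := by
  rw [add_comm, prodP_add]
  rw [hσm]
  simp [cycNorm]

theorem prodP_ne_zero {k : K} (hk : k ≠ 0) (n : ℕ) : (∏ l ∈ range n, (σ ^ l) k) ≠ 0 := by
  apply Finset.prod_ne_zero_iff.mpr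
  intro l _
  intro h; exact hk ((σ ^ l).injective (by rw [h, map_zero]))

theorem norm_inv (hσm : σ ^ m = 1) {k : K} (hk : k ≠ 0) (n : ℕ) :
    (σ ^ n) (cycNorm m σ k) = cycNorm m σ k := by
  have h1 := prodP_add σ k n m
  have h2 := prodP_wrap σ hσm k n
  rw [h1, mul_comm (cycNorm m σ k)] at h2
  exact mul_left_cancel₀ (prodP_ne_zero σ hk n) h2

theorem pow_comm_apply (i j : ℕ) (x : K) : (σ ^ j) ((σ ^ i) x) = (σ ^ i) ((σ ^ j) x) := by
  rw [← AlgEquiv.mul_apply, ← AlgEquiv.mul_apply, pow_mul_comm]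

theorem cycH_mul (hσm : σ ^ m = 1) (j : ℕ) {k : K} (hk : k ≠ 0) (a b : K)
    (hab : (σ ^ j) a = cycNorm m σ k * b) (u v : Fin m → K) :
    cycH m σ (σ ^ j) k (cycMul m σ a u v)
      = cycMul m σ b (cycH m σ (σ ^ j) k u) (cycH m σ (σ ^ j) k v) := by
  funext r
  simp only [cycH, cycMul]
  rw [map_add, add_mul]
  congr 1
  · rw [map_sum, Finset.sum_mul]
    refine Finset.sum_congr rfl fun i _ => ?_
    rw [map_sum, Finset.sum_mul]
    refine Finset.sum_congr rfl fun jj _ => ?_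
    by_cases hij : (i : ℕ) + (jj : ℕ) = (r : ℕ)
    · rw [if_pos hij, if_pos hij, map_mul, pow_comm_apply σ (i : ℕ) j (v jj),
        map_mul (σ ^ (i : ℕ)), ← hij, prodP_add]
      ring
    · rw [if_neg hij, if_neg hij, map_zero, zero_mul]
  · rw [map_sum, Finset.sum_mul]
    refine Finset.sum_congr rfl fun i _ => ?_
    rw [map_sum, Finset.sum_mul]
    refine Finset.sum_congr rfl fun jj _ => ?_
    by_cases hij : (i : ℕ) + (jj : ℕ) = (r : ℕ) + m
    · rw [if_pos hij, if_pos hij, map_mul, map_mul, pow_comm_apply σ (i : ℕ) j (v jj),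
        pow_comm_apply σ (r : ℕ) j a, hab,
        map_mul (σ ^ (r : ℕ)), norm_inv σ hσm hk, map_mul (σ ^ (i : ℕ))]
      have hP : (∏ l ∈ range (i : ℕ), (σ ^ l) k) * (σ ^ (i : ℕ)) (∏ l ∈ range (jj : ℕ), (σ ^ l) k)
          = cycNorm m σ k * ∏ l ∈ range (r : ℕ), (σ ^ l) k := by
        rw [← prodP_add, hij, prodP_wrap σ hσm]
      linear_combination -((σ ^ (j:ℕ)) (u i) * (σ ^ (i : ℕ)) ((σ ^ j) (v jj)) * (σ ^ (r : ℕ)) b) * hP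
    · rw [if_neg hij, if_neg hij, map_zero, zero_mul]

theorem sigma_ne_self [IsGalois F K] [FiniteDimensional F K]
    (hgen : ∀ τ : K ≃ₐ[F] K, τ ∈ Subgroup.zpowers σ)
    {a : K} (ha : a ∉ Set.range (algebraMap F K)) : σ a ≠ a := by
  intro h
  have hσ : σ ∈ MulAction.stabilizer (K ≃ₐ[F] K) a := by
    simpa [AlgEquiv.smul_def] using h
  have h2 : ∀ g : K ≃ₐ[F] K, g a = a := by
    intro g
    have : g ∈ MulAction.stabilizer (K ≃ₐ[F] K) a :=
      Subgroup.zpowers_le.mpr hσ (hgen g)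
    simpa [AlgEquiv.smul_def] using this
  have h3 : IntermediateField.fixedField (⊤ : Subgroup (K ≃ₐ[F] K)) = ⊥ :=
    ((IsGalois.tfae (F := F) (E := K)).out 0 1).mp (inferInstance : IsGalois F K)
  have h4 : a ∈ IntermediateField.fixedField (⊤ : Subgroup (K ≃ₐ[F] K)) := fun g => h2 g
  rw [h3, IntermediateField.mem_bot] at h4
  exact ha h4

theorem T_comm (hm : 2 ≤ m) (x : K) :
    cycMul m σ a (sgl m ⟨1, by omega⟩ 1) (cycEmb K m x)
      = cycMul m σ a (cycEmb K m (σ x)) (sgl m ⟨1, by omega⟩ 1) := by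
  funext r
  rw [cycMul_cycEmb_right σ a (by omega), cycMul_cycEmb_left σ a (by omega)]
  simp only [sgl]
  by_cases hr : r = (⟨1, by omega⟩ : Fin m)
  · subst hr
    simp [pow_one]
  · simp [hr]

theorem sgl_mul_sgl1 (hm : 2 ≤ m) (n : ℕ) (hn : n + 1 ≤ m - 1) (c k : K) :
    cycMul m σ a (sgl m ⟨n, by omega⟩ c) (sgl m ⟨1, by omega⟩ k)
      = sgl m ⟨n+1, by omega⟩ (c * (σ ^ n) k) := by
  funext r
  have hrlt := r.isLt
  rw [cycMul_sgl_right]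
  by_cases h0 : (r : ℕ) = 0
  · rw [dif_neg (by simp only [Fin.val_mk]; omega),
      dif_pos ⟨by simp only [Fin.val_mk]; omega, by simp only [Fin.val_mk]; omega⟩]
    simp only [sgl, Fin.ext_iff, Fin.val_mk]
    rw [if_neg (by omega), if_neg (by omega)]
    simp
  · rw [dif_pos ⟨by simp only [Fin.val_mk]; omega, by simp only [Fin.val_mk]; omega⟩,
      dif_neg (by simp only [Fin.val_mk]; omega)]
    simp only [sgl, Fin.ext_iff, Fin.val_mk, add_zero]
    by_cases hrn : (r : ℕ) = n + 1
    · rw [if_pos (by omega), if_pos (by omega), show (r : ℕ) - 1 = n by omega]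
    · rw [if_neg (by omega), if_neg (by omega), zero_mul]

theorem sgl_mm1_mul_sgl1 (hm : 2 ≤ m) (c k : K) :
    cycMul m σ a (sgl m ⟨m-1, by omega⟩ c) (sgl m ⟨1, by omega⟩ k)
      = cycEmb K m (c * (σ ^ (m-1)) k * a) := by
  funext r
  have hrlt := r.isLt
  rw [cycMul_sgl_right]
  by_cases h0 : (r : ℕ) = 0
  · rw [dif_neg (by simp only [Fin.val_mk]; omega),
      dif_pos ⟨by simp only [Fin.val_mk]; omega, by simp only [Fin.val_mk]; omega⟩]
    simp only [sgl, cycEmb, Fin.ext_iff, Fin.val_mk]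
    rw [if_pos (by omega), if_pos h0, show (r : ℕ) + m - 1 = m - 1 by omega, h0, pow_zero]
    simp
  · rw [dif_pos ⟨by simp only [Fin.val_mk]; omega, by simp only [Fin.val_mk]; omega⟩,
      dif_neg (by simp only [Fin.val_mk]; omega)]
    simp only [sgl, cycEmb, Fin.ext_iff, Fin.val_mk, add_zero]
    rw [if_neg (by omega), if_neg h0, zero_mul]

end Stmt10Aux


open Stmt10Aux in
/-- For `a, b ∈ K∖F`, the nonassociative cyclic algebras `(K/F,σ,a)` and
`(K/F,σ,b)` are isomorphic as `F`-algebras if and only if there exist `j ∈ {0,…,m−1}` and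
`k ∈ K^×` such that `σ^j(a) = N_{K/F}(k)·b`. -/
theorem stmt10 {F K : Type*} [Field F] [Field K] [Algebra F K]
    (m : ℕ) (hm : 2 ≤ m) [IsGalois F K] [FiniteDimensional F K]
    (hrank : Module.finrank F K = m)
    (σ : K ≃ₐ[F] K) (hgen : ∀ τ : K ≃ₐ[F] K, τ ∈ Subgroup.zpowers σ)
    (a b : K) (ha : a ∉ Set.range (algebraMap F K)) (hb : b ∉ Set.range (algebraMap F K)) :
    (∃ φ : (Fin m → K) → (Fin m → K), IsCycIso m σ a b φ) ↔
      ∃ j < m, ∃ k : K, k ≠ 0 ∧ (σ ^ j) a = cycNorm m σ k * b := by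
  have hm0 : 0 < m := by omega
  haveI : NeZero m := ⟨by omega⟩
  have hcard : Fintype.card (K ≃ₐ[F] K) = m := by
    rw [← Nat.card_eq_fintype_card, IsGalois.card_aut_eq_finrank, hrank]
  have horder : orderOf σ = m := by
    rw [orderOf_eq_card_of_forall_mem_zpowers hgen, Nat.card_eq_fintype_card, hcard]
  have hσm : σ ^ m = 1 := by
    rw [← horder]; exact pow_orderOf_eq_one σ
  have hpowinj : ∀ i i' : ℕ, i < m → i' < m → σ ^ i = σ ^ i' → i = i' := by
    intro i i' hi hi' h
    have h2 := pow_inj_mod.mp h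
    rwa [horder, Nat.mod_eq_of_lt hi, Nat.mod_eq_of_lt hi'] at h2
  have hσa : σ a ≠ a := sigma_ne_self σ hgen ha
  have hσb : σ b ≠ b := sigma_ne_self σ hgen hb
  constructor
  · rintro ⟨φ, ⟨hinj, hsurj⟩, hadd, hsmul, hone, hmul⟩
    have hφ0 : φ 0 = 0 := by
      have h := hadd 0 0
      rw [add_zero] at h
      have h2 : φ 0 + 0 = φ 0 + φ 0 := by rw [add_zero]; exact h
      exact (add_left_cancel h2).symm
    set T : Fin m → K := sgl m ⟨1, by omega⟩ 1 with hT
    set Tm1 : Fin m → K := sgl m ⟨m-1, by omega⟩ 1 with hTm1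
    -- φ maps K t⁰ to K t⁰
    have hEmb : ∀ x : K, φ (cycEmb K m x) = cycEmb K m (φ (cycEmb K m x) 0) := by
      intro x
      have hz : ∀ r : Fin m, (r : ℕ) ≠ 0 → φ (cycEmb K m x) r = 0 := by
        apply nucKey σ b hm hσb
        obtain ⟨u₀, hu₀⟩ := hsurj Tm1
        obtain ⟨v₀, hv₀⟩ := hsurj T
        rw [← hTm1, ← hT, ← hu₀, ← hv₀, ← hmul, ← hmul, ← hmul, ← hmul,
          cycEmb_leftNuc σ a hm0]
      funext r
      by_cases h0 : (r : ℕ) = 0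
      · have hr0 : r = 0 := Fin.ext (by simpa using h0)
        subst hr0
        simp [cycEmb]
      · rw [hz r h0]
        simp [cycEmb, h0]
    set τ₀ : K → K := fun x => φ (cycEmb K m x) 0 with hτ₀
    have hEmb' : ∀ x : K, φ (cycEmb K m x) = cycEmb K m (τ₀ x) := hEmb
    have hEmbAdd : ∀ x y : K, cycEmb K m (x + y) = cycEmb K m x + cycEmb K m y := by
      intro x y; funext i; by_cases h : (i : ℕ) = 0 <;> simp [cycEmb, h]
    have hEmbZero : cycEmb K m (0 : K) = 0 := by
      funext i; simp [cycEmb]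
    have hEmbApply0 : ∀ x : K, cycEmb K m x 0 = x := by
      intro x; simp [cycEmb]
    have hEmbMul : ∀ x y : K, cycMul m σ a (cycEmb K m x) (cycEmb K m y) = cycEmb K m (x * y) := by
      intro x y
      rw [cycMul_cycEmb_left σ a hm0]
      funext i
      by_cases h : (i : ℕ) = 0 <;> simp [cycEmb, h]
    have hEmbMulb : ∀ x y : K, cycMul m σ b (cycEmb K m x) (cycEmb K m y) = cycEmb K m (x * y) := by
      intro x y
      rw [cycMul_cycEmb_left σ b hm0]
      funext i
      by_cases h : (i : ℕ) = 0 <;> simp [cycEmb, h]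
    have hτ₀mul : ∀ x y : K, τ₀ (x * y) = τ₀ x * τ₀ y := by
      intro x y
      have h1 := congrArg φ (hEmbMul x y)
      rw [hmul, hEmb' x, hEmb' y, hEmbMulb, hEmb' (x*y)] at h1
      have h2 := congrFun h1 0
      rw [hEmbApply0, hEmbApply0] at h2
      exact h2.symm
    have hτ₀add : ∀ x y : K, τ₀ (x + y) = τ₀ x + τ₀ y := by
      intro x y
      simp only [hτ₀, hEmbAdd, hadd, Pi.add_apply]
    have hcycOne : cycEmb K m (1 : K) = cycOne K m := rfl
    have hτ₀one : τ₀ 1 = 1 := by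
      simp only [hτ₀, hcycOne, hone]
      simp [cycOne]
    have hτ₀zero : τ₀ 0 = 0 := by
      simp only [hτ₀, hEmbZero, hφ0]
      rfl
    have hτ₀commutes : ∀ c : F, τ₀ (algebraMap F K c) = algebraMap F K c := by
      intro c
      have h1 : cycEmb K m (algebraMap F K c) = c • cycOne K m := by
        funext i
        by_cases h : (i : ℕ) = 0 <;> simp [cycEmb, cycOne, h, Algebra.smul_def]
      simp only [hτ₀, h1, hsmul, hone]
      simp [cycOne, Algebra.smul_def]
    have hτ₀inj : Function.Injective τ₀ := by
      intro x y hxy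
      have h1 : φ (cycEmb K m x) = φ (cycEmb K m y) := by
        rw [hEmb' x, hEmb' y, hxy]
      have h2 := hinj h1
      have := congrFun h2 0
      rwa [hEmbApply0, hEmbApply0] at this
    have hτ₀surj : Function.Surjective τ₀ := by
      intro y
      obtain ⟨z, hz⟩ := hsurj (cycEmb K m y)
      have hzr : ∀ r : Fin m, (r : ℕ) ≠ 0 → z r = 0 := by
        apply nucKey σ a hm hσa
        apply hinj
        rw [hmul, hmul, hmul, hmul, hz, cycEmb_leftNuc σ b hm0]
      have hzemb : z = cycEmb K m (z 0) := by
        funext r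
        by_cases h0 : (r : ℕ) = 0
        · have hr0 : r = 0 := Fin.ext (by simpa using h0)
          subst hr0
          simp [cycEmb]
        · rw [hzr r h0]
          simp [cycEmb, h0]
      refine ⟨z 0, ?_⟩
      have : φ (cycEmb K m (z 0)) 0 = cycEmb K m y 0 := by
        rw [← hzemb, hz]
      rwa [hEmbApply0] at this
    set τA : K →ₐ[F] K :=
      { toFun := τ₀, map_one' := hτ₀one, map_mul' := hτ₀mul, map_zero' := hτ₀zero,
        map_add' := hτ₀add, commutes' := hτ₀commutes } with hτA
    set τ : K ≃ₐ[F] K := AlgEquiv.ofBijective τA ⟨hτ₀inj, hτ₀surj⟩ with hτdef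
    have hτapp : ∀ x : K, τ x = τ₀ x := fun x => rfl
    obtain ⟨n, hn⟩ := Subgroup.mem_zpowers_iff.mp (hgen τ)
    have hmodnn : 0 ≤ n % (m : ℤ) := Int.emod_nonneg n (by exact_mod_cast (by omega : m ≠ 0))
    have hmodlt : n % (m : ℤ) < (m : ℤ) := Int.emod_lt_of_pos n (by exact_mod_cast hm0)
    set j := (n % (m : ℤ)).toNat with hjdef
    have hjm : j < m := by omega
    have hσj : σ ^ j = τ := by
      rw [← hn, ← zpow_natCast, hjdef, Int.toNat_of_nonneg hmodnn, ← horder]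
      exact zpow_mod_orderOf σ n
    have hτ₀eq : ∀ x, τ₀ x = (σ ^ j) x := by intro x; rw [hσj]; rfl
    set w := φ T with hwdef
    have hTram : ∀ x : K,
        cycMul m σ b w (cycEmb K m (τ₀ x)) = cycMul m σ b (cycEmb K m (τ₀ (σ x))) w := by
      intro x
      have h1 := congrArg φ (T_comm σ a hm x)
      rw [hmul, hmul, hEmb' x, hEmb' (σ x)] at h1
      rw [← hT] at h1
      rw [← hwdef] at h1
      exact h1
    have hwi : ∀ i : Fin m, (i : ℕ) ≠ 1 → w i = 0 := by
      intro i hi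
      by_contra hwi0
      have h2 : ∀ x : K, w i * (σ ^ (i : ℕ)) (τ₀ x) = τ₀ (σ x) * w i := by
        intro x
        have h3 := congrFun (hTram x) i
        rwa [cycMul_cycEmb_right σ b hm0, cycMul_cycEmb_left σ b hm0] at h3
      have h4 : ∀ y : K, (σ ^ (i : ℕ)) y = σ y := by
        intro y
        obtain ⟨x, rfl⟩ := (σ ^ j).surjective y
        have h5 := h2 x
        rw [hτ₀eq, hτ₀eq, mul_comm ((σ ^ j) (σ x))] at h5
        have h6 := mul_left_cancel₀ hwi0 h5
        rw [h6]
        have := pow_comm_apply σ 1 j x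
        rwa [pow_one] at this
      have h7 : σ ^ (i : ℕ) = σ ^ 1 := by
        apply AlgEquiv.ext
        intro y
        rw [pow_one]
        exact h4 y
      exact hi (hpowinj (i : ℕ) 1 i.isLt (by omega) h7)
    set k := w ⟨1, by omega⟩ with hkdef
    have hk0 : k ≠ 0 := by
      intro hk0
      have hwz : w = 0 := by
        funext i
        by_cases hi : (i : ℕ) = 1
        · have h8 : i = (⟨1, by omega⟩ : Fin m) := Fin.ext (by simpa using hi)
          rw [h8, ← hkdef, hk0]
          rfl
        · exact hwi i hi
      have hT0 : T = 0 := hinj (by rw [← hwdef, hwz, hφ0])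
      have h9 := congrFun hT0 ⟨1, by omega⟩
      simp [hT, sgl] at h9
    have hwsgl : w = sgl m ⟨1, by omega⟩ k := by
      funext i
      by_cases hi : (i : ℕ) = 1
      · have h8 : i = (⟨1, by omega⟩ : Fin m) := Fin.ext (by simpa using hi)
        rw [h8, ← hkdef]
        simp [sgl]
      · rw [hwi i hi]
        have h9 : i ≠ (⟨1, by omega⟩ : Fin m) := by
          intro h; exact hi (by rw [h])
        simp [sgl, h9]
    have hTi : ∀ i : ℕ, ∀ _h1 : 1 ≤ i, ∀ _h2 : i + 1 ≤ m,
        φ (sgl m ⟨i, by omega⟩ 1) = sgl m ⟨i, by omega⟩ (∏ l ∈ Finset.range i, (σ ^ l) k) := by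
      intro i
      induction i with
      | zero => intro h1 _; exact absurd h1 (by omega)
      | succ p ih =>
        intro h1 h2
        by_cases hp : p = 0
        · subst hp
          have h10 : (∏ l ∈ Finset.range 1, (σ ^ l) k) = k := by simp
          rw [h10, ← hwsgl, hwdef]
        · have h3 := ih (by omega) (by omega)
          have h4 : cycMul m σ a (sgl m ⟨p, by omega⟩ (1 : K)) (sgl m ⟨1, by omega⟩ (1 : K))
              = sgl m ⟨p + 1, by omega⟩ (1 : K) := by
            rw [sgl_mul_sgl1 σ a hm p (by omega), map_one, mul_one]
          have h5 := congrArg φ h4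
          rw [hmul, h3, ← hT, ← hwdef, hwsgl, sgl_mul_sgl1 σ b hm p (by omega)] at h5
          rw [← h5, Finset.prod_range_succ]
    have hfin := congrArg φ (Tm1_mul_T σ a hm)
    rw [hmul, ← hT, ← hwdef, hwsgl] at hfin
    have hTm1img := hTi (m - 1) (by omega) (by omega)
    rw [hTm1img, sgl_mm1_mul_sgl1 σ b hm, hEmb' a] at hfin
    have h6 := congrFun hfin 0
    rw [hEmbApply0, hEmbApply0] at h6
    refine ⟨j, hjm, k, hk0, ?_⟩
    rw [show (σ ^ j) a = τ₀ a from (hτ₀eq a).symm, ← h6]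
    congr 1
    show _ = ∏ l ∈ Finset.range m, (σ ^ l) k
    rw [← Finset.prod_range_succ, show m - 1 + 1 = m by omega]
  · rintro ⟨j, hj, k, hk, hab⟩
    refine ⟨cycH m σ (σ ^ j) k, ?_, ?_, ?_, ?_, cycH_mul σ hσm j hk a b hab⟩
    · apply Function.bijective_iff_has_inverse.mpr
      refine ⟨fun u i => (σ ^ j).symm (u i * (∏ l ∈ Finset.range (i : ℕ), (σ ^ l) k)⁻¹), ?_, ?_⟩
      · intro u
        funext i
        simp only [cycH]
        rw [mul_assoc, mul_inv_cancel₀ (prodP_ne_zero σ hk _), mul_one,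
          AlgEquiv.symm_apply_apply]
      · intro u
        funext i
        simp only [cycH]
        rw [AlgEquiv.apply_symm_apply, mul_assoc,
          inv_mul_cancel₀ (prodP_ne_zero σ hk _), mul_one]
    · intro u v
      funext i
      simp [cycH, map_add, add_mul]
    · intro c u
      funext i
      simp only [cycH, Pi.smul_apply]
      rw [map_smul, smul_mul_assoc]
    · funext i
      by_cases h : (i : ℕ) = 0 <;> simp [cycH, cycOne, h]
end

section
/- Let a ∈ K∖F. Then the nucleus of the nonassociative cyclic algebra A = (K/F,σ,a), namely the set of all z ∈ A such that (z∘u)∘v = z∘(u∘v), (u∘z)∘v = u∘(z∘v) and (u∘v)∘z = u∘(v∘z) for all u, v ∈ A, is exactly the copy of K in A, i.e. the set of elements of the form x t^0 with x ∈ K. -/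
open Finset

section CycHelpers

variable {F K : Type*} [Field F] [Field K] [Algebra F K]

private lemma inner_collapse {M : Type*} [AddCommMonoid M] {m : ℕ} (P : Fin m → Prop)
    [DecidablePred P] (j0 : Fin m) (f : Fin m → M) :
    (∑ j : Fin m, if P j then if j = j0 then f j else 0 else 0) = if P j0 then f j0 else 0 := by
  rw [show (∑ j : Fin m, if P j then if j = j0 then f j else 0 else 0)
      = ∑ j : Fin m, if j = j0 then (if P j then f j else 0) else 0 from
    Finset.sum_congr rfl fun j _ => by split_ifs <;> rfl]
  rw [Finset.sum_ite_eq']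
  simp

private lemma mono_eval (m : ℕ) (σ : K ≃ₐ[F] K) (a : K) (u : Fin m → K) (j0 : Fin m) (y : K)
    (k : Fin m) :
    cycMul m σ a u (fun j => if j = j0 then y else 0) k =
      (∑ i : Fin m, if (i : ℕ) + (j0 : ℕ) = (k : ℕ) then u i * (σ ^ (i : ℕ)) y else 0) +
        ∑ i : Fin m, if (i : ℕ) + (j0 : ℕ) = (k : ℕ) + m then
          u i * (σ ^ (i : ℕ)) y * (σ ^ (k : ℕ)) a else 0 := by
  simp only [cycMul]
  congr 1
  · refine Finset.sum_congr rfl fun i _ => ?_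
    calc (∑ j : Fin m, if (i : ℕ) + (j : ℕ) = (k : ℕ) then
            u i * (σ ^ (i : ℕ)) (if j = j0 then y else 0) else 0)
        = ∑ j : Fin m, if (i : ℕ) + (j : ℕ) = (k : ℕ) then
            (if j = j0 then u i * (σ ^ (i : ℕ)) y else 0) else 0 :=
          Finset.sum_congr rfl fun j _ => by split_ifs <;> simp
      _ = _ := inner_collapse _ j0 _
  · refine Finset.sum_congr rfl fun i _ => ?_
    calc (∑ j : Fin m, if (i : ℕ) + (j : ℕ) = (k : ℕ) + m then
            u i * (σ ^ (i : ℕ)) (if j = j0 then y else 0) * (σ ^ (k : ℕ)) a else 0)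
        = ∑ j : Fin m, if (i : ℕ) + (j : ℕ) = (k : ℕ) + m then
            (if j = j0 then u i * (σ ^ (i : ℕ)) y * (σ ^ (k : ℕ)) a else 0) else 0 :=
          Finset.sum_congr rfl fun j _ => by split_ifs <;> simp
      _ = _ := inner_collapse _ j0 _

private lemma cycEmb_eq_mono {m : ℕ} [NeZero m] (x : K) :
    cycEmb K m x = fun i => if i = 0 then x else 0 := by
  funext i
  have h : ((i : ℕ) = 0) ↔ (i = 0) := ⟨fun h => Fin.ext (by simpa using h), fun h => by simp [h]⟩
  simp only [cycEmb, h]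

private lemma mul_emb (m : ℕ) [NeZero m] (σ : K ≃ₐ[F] K) (a : K) (u : Fin m → K) (x : K) :
    cycMul m σ a u (cycEmb K m x) = fun k => u k * (σ ^ (k : ℕ)) x := by
  funext k
  rw [cycEmb_eq_mono, mono_eval]
  have e1 : (∑ i : Fin m, if (i : ℕ) + ((0 : Fin m) : ℕ) = (k : ℕ) then u i * (σ ^ (i : ℕ)) x else 0)
      = u k * (σ ^ (k : ℕ)) x := by
    rw [show (∑ i : Fin m, if (i : ℕ) + ((0 : Fin m) : ℕ) = (k : ℕ) then u i * (σ ^ (i : ℕ)) x else 0)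
        = ∑ i : Fin m, if i = k then u i * (σ ^ (i : ℕ)) x else 0 from
      Finset.sum_congr rfl fun i _ => by
        have h : ((i : ℕ) + ((0 : Fin m) : ℕ) = (k : ℕ)) ↔ (i = k) :=
          ⟨fun h => Fin.ext (by simpa using h), fun h => by simp [h]⟩
        split_ifs with h1 h2 <;> simp_all]
    rw [Finset.sum_ite_eq']
    simp
  have e2 : (∑ i : Fin m, if (i : ℕ) + ((0 : Fin m) : ℕ) = (k : ℕ) + m then
      u i * (σ ^ (i : ℕ)) x * (σ ^ (k : ℕ)) a else 0) = 0 := by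
    refine Finset.sum_eq_zero fun i _ => if_neg ?_
    have := i.isLt
    simp only [Fin.val_zero]
    omega
  rw [e1, e2, add_zero]

private lemma emb_mul (m : ℕ) [NeZero m] (σ : K ≃ₐ[F] K) (a : K) (u : Fin m → K) (x : K) :
    cycMul m σ a (cycEmb K m x) u = fun k => x * u k := by
  funext k
  simp only [cycMul, cycEmb]
  have e1 : (∑ i : Fin m, ∑ j : Fin m,
      if (i : ℕ) + (j : ℕ) = (k : ℕ) then
        (if (i : ℕ) = 0 then x else 0) * (σ ^ (i : ℕ)) (u j) else 0) = x * u k := by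
    rw [Finset.sum_comm]
    calc (∑ j : Fin m, ∑ i : Fin m,
        if (i : ℕ) + (j : ℕ) = (k : ℕ) then
          (if (i : ℕ) = 0 then x else 0) * (σ ^ (i : ℕ)) (u j) else 0)
        = ∑ j : Fin m, ∑ i : Fin m,
            if (i : ℕ) + (j : ℕ) = (k : ℕ) then
              (if i = 0 then x * (σ ^ (i : ℕ)) (u j) else 0) else 0 := by
          refine Finset.sum_congr rfl fun j _ => Finset.sum_congr rfl fun i _ => ?_
          have h : ((i : ℕ) = 0) ↔ (i = 0) :=
            ⟨fun h => Fin.ext (by simpa using h), fun h => by simp [h]⟩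
          split_ifs with h1 h2 h3 <;> simp_all
      _ = ∑ j : Fin m, if ((0 : Fin m) : ℕ) + (j : ℕ) = (k : ℕ) then
            x * (σ ^ ((0 : Fin m) : ℕ)) (u j) else 0 :=
          Finset.sum_congr rfl fun j _ => inner_collapse _ 0 _
      _ = ∑ j : Fin m, if j = k then x * u j else 0 := by
          refine Finset.sum_congr rfl fun j _ => ?_
          have h : (((0 : Fin m) : ℕ) + (j : ℕ) = (k : ℕ)) ↔ (j = k) :=
            ⟨fun h => Fin.ext (by simpa using h), fun h => by simp [h]⟩
          split_ifs with h1 h2 <;> simp_all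
      _ = x * u k := by rw [Finset.sum_ite_eq']; simp
  have e2 : (∑ i : Fin m, ∑ j : Fin m,
      if (i : ℕ) + (j : ℕ) = (k : ℕ) + m then
        (if (i : ℕ) = 0 then x else 0) * (σ ^ (i : ℕ)) (u j) * (σ ^ (k : ℕ)) a else 0) = 0 := by
    refine Finset.sum_eq_zero fun i _ => Finset.sum_eq_zero fun j _ => ?_
    have hj := j.isLt
    split_ifs with h1 h2
    · omega
    · simp
    · rfl
  rw [e1, e2, add_zero]

private lemma smul_mul (m : ℕ) (σ : K ≃ₐ[F] K) (a : K) (x : K) (u v : Fin m → K) :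
    cycMul m σ a (fun i => x * u i) v = fun k => x * cycMul m σ a u v k := by
  funext k
  simp only [cycMul, mul_add, Finset.mul_sum, mul_ite, mul_zero]
  congr 1 <;>
    exact Finset.sum_congr rfl fun i _ => Finset.sum_congr rfl fun j _ => by
      split_ifs <;> ring

private lemma mid_assoc (m : ℕ) (σ : K ≃ₐ[F] K) (a : K) (x : K) (u v : Fin m → K) :
    cycMul m σ a (fun i => u i * (σ ^ (i : ℕ)) x) v = cycMul m σ a u (fun j => x * v j) := by
  funext k
  simp only [cycMul]
  congr 1 <;>
    exact Finset.sum_congr rfl fun i _ => Finset.sum_congr rfl fun j _ => by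
      split_ifs <;> [skip; rfl] <;> rw [map_mul] <;> ring

private lemma right_assoc (m : ℕ) (σ : K ≃ₐ[F] K) (a : K) (hσm : σ ^ m = 1) (x : K)
    (u v : Fin m → K) :
    cycMul m σ a u (fun j => v j * (σ ^ (j : ℕ)) x) =
      fun k => cycMul m σ a u v k * (σ ^ (k : ℕ)) x := by
  funext k
  simp only [cycMul, add_mul, Finset.sum_mul, ite_mul, zero_mul]
  congr 1
  · refine Finset.sum_congr rfl fun i _ => Finset.sum_congr rfl fun j _ => ?_
    split_ifs with h
    · have h2 : (σ ^ (i : ℕ)) ((σ ^ (j : ℕ)) x) = (σ ^ ((i : ℕ) + (j : ℕ))) x := by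
        rw [pow_add]; rfl
      rw [map_mul, h2, h]
      ring
    · rfl
  · refine Finset.sum_congr rfl fun i _ => Finset.sum_congr rfl fun j _ => ?_
    split_ifs with h
    · have h2 : (σ ^ (i : ℕ)) ((σ ^ (j : ℕ)) x) = (σ ^ ((i : ℕ) + (j : ℕ))) x := by
        rw [pow_add]; rfl
      have h3 : (σ ^ ((k : ℕ) + m)) x = (σ ^ (k : ℕ)) x := by
        rw [pow_add, hσm, mul_one]
      rw [map_mul, h2, h, h3]
      ring
    · rfl

private lemma nucleus_coord_zero (m : ℕ) (hm : 2 ≤ m) (σ : K ≃ₐ[F] K) (a : K) (hσa : σ a ≠ a)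
    (z : Fin m → K)
    (hz : ∀ u v : Fin m → K,
      cycMul m σ a (cycMul m σ a z u) v = cycMul m σ a z (cycMul m σ a u v))
    (k : Fin m) (h0 : (k : ℕ) ≠ 0) : z k = 0 := by
  haveI : NeZero m := ⟨by omega⟩
  have hk1 : 1 ≤ (k : ℕ) := Nat.one_le_iff_ne_zero.mpr h0
  have hkm : (k : ℕ) < m := k.isLt
  set P : Fin m := ⟨m - (k : ℕ), by omega⟩ with hPdef
  set Q : Fin m := ⟨1, by omega⟩ with hQdef
  have hP : (P : ℕ) = m - (k : ℕ) := rfl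
  have hQ : (Q : ℕ) = 1 := rfl
  -- inner product (z ∘ e_P) at 0
  have hw : cycMul m σ a z (fun j => if j = P then (1 : K) else 0) 0 = z k * a := by
    rw [mono_eval]
    have e1 : (∑ i : Fin m, if (i : ℕ) + (P : ℕ) = ((0 : Fin m) : ℕ)
        then z i * (σ ^ (i : ℕ)) (1 : K) else 0) = 0 :=
      Finset.sum_eq_zero fun i _ => if_neg (by simp only [hP, Fin.val_zero]; omega)
    have e2 : (∑ i : Fin m, if (i : ℕ) + (P : ℕ) = ((0 : Fin m) : ℕ) + m
        then z i * (σ ^ (i : ℕ)) (1 : K) * (σ ^ ((0 : Fin m) : ℕ)) a else 0) = z k * a := by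
      rw [Finset.sum_eq_single k]
      · rw [if_pos (by simp only [hP, Fin.val_zero]; omega)]
        simp
      · intro b _ hb
        refine if_neg fun hc => hb (Fin.ext ?_)
        simp only [hP, Fin.val_zero] at hc
        have := b.isLt
        omega
      · simp
    rw [e1, e2, zero_add]
  -- LHS of the nucleus identity at Q
  have hLHS : cycMul m σ a (cycMul m σ a z (fun j => if j = P then (1 : K) else 0))
      (fun j => if j = Q then (1 : K) else 0) Q = z k * a := by
    rw [mono_eval]
    have e1 : (∑ i : Fin m, if (i : ℕ) + (Q : ℕ) = (Q : ℕ)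
        then cycMul m σ a z (fun j => if j = P then (1 : K) else 0) i * (σ ^ (i : ℕ)) (1 : K) else 0)
        = z k * a := by
      rw [Finset.sum_eq_single (0 : Fin m)]
      · rw [if_pos (by simp), Fin.val_zero, pow_zero, AlgEquiv.one_apply, mul_one, hw]
      · intro b _ hb
        refine if_neg fun hc => hb (Fin.ext ?_)
        simp only [Fin.val_zero]
        omega
      · simp
    have e2 : (∑ i : Fin m, if (i : ℕ) + (Q : ℕ) = (Q : ℕ) + m
        then cycMul m σ a z (fun j => if j = P then (1 : K) else 0) i * (σ ^ (i : ℕ)) (1 : K)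
          * (σ ^ (Q : ℕ)) a else 0) = 0 :=
      Finset.sum_eq_zero fun i _ => if_neg (by have := i.isLt; omega)
    rw [e1, e2, add_zero]
  have hkey := congrFun (hz (fun j => if j = P then (1 : K) else 0)
    (fun j => if j = Q then (1 : K) else 0)) Q
  rw [hLHS] at hkey
  -- now compute RHS = z k * σ a, by cases on whether (k:ℕ) = 1
  have hRHS : cycMul m σ a z (cycMul m σ a (fun j => if j = P then (1 : K) else 0)
      (fun j => if j = Q then (1 : K) else 0)) Q = z k * σ a := by
    by_cases hk2 : (k : ℕ) = 1
    -- case k = 1 : e_P ∘ e_Q = a • e_0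
    · have hv : cycMul m σ a (fun j => if j = P then (1 : K) else 0)
          (fun j => if j = Q then (1 : K) else 0) = fun j => if j = (0 : Fin m) then a else 0 := by
        funext k'
        rw [mono_eval]
        have e1 : (∑ i : Fin m, if (i : ℕ) + (Q : ℕ) = (k' : ℕ)
            then (if i = P then (1 : K) else 0) * (σ ^ (i : ℕ)) (1 : K) else 0) = 0 := by
          refine Finset.sum_eq_zero fun i _ => ?_
          by_cases hip : i = P
          · refine if_neg fun hc => ?_
            rw [hip, hP, hQ] at hc
            have := k'.isLt
            omega
          · split_ifs <;> simp [hip]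
        have e2 : (∑ i : Fin m, if (i : ℕ) + (Q : ℕ) = (k' : ℕ) + m
            then (if i = P then (1 : K) else 0) * (σ ^ (i : ℕ)) (1 : K) * (σ ^ (k' : ℕ)) a else 0)
            = if k' = 0 then a else 0 := by
          rw [Finset.sum_eq_single P]
          · by_cases hc : (k' : ℕ) = 0
            · have hk0 : k' = (0 : Fin m) := Fin.ext (by simp [hc])
              rw [if_pos (by rw [hP, hQ]; omega), hk0, if_pos rfl]
              simp
            · rw [if_neg (by rw [hP, hQ]; omega),
                if_neg fun h => hc (by rw [h]; simp)]
          · intro b _ hb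
            split_ifs <;> simp [hb]
          · simp
        rw [e1, e2, zero_add]
      rw [hv, mono_eval]
      have e1 : (∑ i : Fin m, if (i : ℕ) + ((0 : Fin m) : ℕ) = (Q : ℕ)
          then z i * (σ ^ (i : ℕ)) a else 0) = z k * σ a := by
        rw [Finset.sum_eq_single k]
        · rw [if_pos (by simp only [Fin.val_zero]; omega), hk2, pow_one]
        · intro b _ hb
          refine if_neg fun hc => hb (Fin.ext ?_)
          simp only [Fin.val_zero] at hc
          omega
        · simp
      have e2 : (∑ i : Fin m, if (i : ℕ) + ((0 : Fin m) : ℕ) = (Q : ℕ) + m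
          then z i * (σ ^ (i : ℕ)) a * (σ ^ (Q : ℕ)) a else 0) = 0 :=
        Finset.sum_eq_zero fun i _ => if_neg
          (by have := i.isLt; simp only [Fin.val_zero]; omega)
      rw [e1, e2, add_zero]
    -- case k ≥ 2 : e_P ∘ e_Q = e_{P+1}
    · have hPQ : (m - (k : ℕ)) + 1 < m := by omega
      have hv : cycMul m σ a (fun j => if j = P then (1 : K) else 0)
          (fun j => if j = Q then (1 : K) else 0)
          = fun j => if j = (⟨m - (k : ℕ) + 1, hPQ⟩ : Fin m) then (1 : K) else 0 := by
        funext k'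
        rw [mono_eval]
        have e2 : (∑ i : Fin m, if (i : ℕ) + (Q : ℕ) = (k' : ℕ) + m
            then (if i = P then (1 : K) else 0) * (σ ^ (i : ℕ)) (1 : K) * (σ ^ (k' : ℕ)) a else 0)
            = 0 := by
          refine Finset.sum_eq_zero fun i _ => ?_
          by_cases hip : i = P
          · refine if_neg fun hc => ?_
            rw [hip, hP, hQ] at hc
            have := k'.isLt
            omega
          · split_ifs <;> simp [hip]
        have e1 : (∑ i : Fin m, if (i : ℕ) + (Q : ℕ) = (k' : ℕ)
            then (if i = P then (1 : K) else 0) * (σ ^ (i : ℕ)) (1 : K) else 0)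
            = if k' = (⟨m - (k : ℕ) + 1, hPQ⟩ : Fin m) then (1 : K) else 0 := by
          rw [Finset.sum_eq_single P]
          · by_cases hc : (k' : ℕ) = m - (k : ℕ) + 1
            · have hk0 : k' = (⟨m - (k : ℕ) + 1, hPQ⟩ : Fin m) := Fin.ext (by simp [hc])
              rw [if_pos (by rw [hP, hQ]; omega), hk0, if_pos rfl]
              simp
            · rw [if_neg (by rw [hP, hQ]; omega),
                if_neg fun h => hc (by rw [h])]
          · intro b _ hb
            split_ifs <;> simp [hb]
          · simp
        rw [e1, e2, add_zero]
      rw [hv, mono_eval]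
      have e1 : (∑ i : Fin m, if (i : ℕ) + ((⟨m - (k : ℕ) + 1, hPQ⟩ : Fin m) : ℕ) = (Q : ℕ)
          then z i * (σ ^ (i : ℕ)) (1 : K) else 0) = 0 :=
        Finset.sum_eq_zero fun i _ => if_neg (by show ¬(_ + (m - (k:ℕ) + 1) = 1); omega)
      have e2 : (∑ i : Fin m, if (i : ℕ) + ((⟨m - (k : ℕ) + 1, hPQ⟩ : Fin m) : ℕ) = (Q : ℕ) + m
          then z i * (σ ^ (i : ℕ)) (1 : K) * (σ ^ (Q : ℕ)) a else 0) = z k * σ a := by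
        rw [Finset.sum_eq_single k]
        · rw [if_pos (by show (k:ℕ) + (m - (k:ℕ) + 1) = 1 + m; omega)]
          rw [map_one, mul_one, hQ, pow_one]
        · intro b _ hb
          refine if_neg fun hc => hb (Fin.ext ?_)
          have := b.isLt
          simp only [hQ] at hc
          omega
        · simp
      rw [e1, e2, zero_add]
  rw [hRHS] at hkey
  -- z k * a = z k * σ a and σ a ≠ a give z k = 0
  by_contra hzk
  exact hσa (mul_left_cancel₀ hzk hkey).symm

end CycHelpers

/-- For `a ∈ K∖F`, the nucleus of the nonassociative cyclic algebra
`A = (K/F,σ,a)` is exactly the copy of `K` in `A`, i.e. `{x t^0 : x ∈ K}`. -/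
theorem stmt12 {F K : Type*} [Field F] [Field K] [Algebra F K]
    (m : ℕ) (hm : 2 ≤ m) [IsGalois F K] [FiniteDimensional F K]
    (hrank : Module.finrank F K = m)
    (σ : K ≃ₐ[F] K) (hgen : ∀ τ : K ≃ₐ[F] K, τ ∈ Subgroup.zpowers σ)
    (a : K) (ha : a ∉ Set.range (algebraMap F K)) :
    {z : Fin m → K | ∀ u v : Fin m → K,
        cycMul m σ a (cycMul m σ a z u) v = cycMul m σ a z (cycMul m σ a u v) ∧
        cycMul m σ a (cycMul m σ a u z) v = cycMul m σ a u (cycMul m σ a z v) ∧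
        cycMul m σ a (cycMul m σ a u v) z = cycMul m σ a u (cycMul m σ a v z)} =
      Set.range (cycEmb K m) := by
  haveI : NeZero m := ⟨by omega⟩
  have hσm : σ ^ m = 1 := by
    have hc : Fintype.card (K ≃ₐ[F] K) = m := by
      rw [← Nat.card_eq_fintype_card, IsGalois.card_aut_eq_finrank F K, hrank]
    rw [← hc]
    exact pow_card_eq_one
  have hσa : σ a ≠ a := by
    intro haσ
    apply ha
    have hbot : IntermediateField.fixedField (⊤ : Subgroup (K ≃ₐ[F] K)) = ⊥ :=
      OrderIso.map_bot (@IsGalois.intermediateFieldEquivSubgroup F _ K _ _ _ _).symm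
    have hfixn : ∀ n : ℕ, (σ ^ n) a = a := by
      intro n; induction n with
      | zero => simp
      | succ n ih => rw [pow_succ, AlgEquiv.mul_apply, haσ, ih]
    have hfix : ∀ τ : K ≃ₐ[F] K, τ a = a := by
      intro τ
      obtain ⟨n, rfl⟩ := hgen τ
      rcases n with n | n
      · show (σ ^ (n : ℤ)) a = a
        rw [zpow_natCast]
        exact hfixn n
      · show (σ ^ (Int.negSucc n)) a = a
        rw [zpow_negSucc]
        apply (σ ^ (n + 1)).injective
        rw [hfixn (n + 1), ← AlgEquiv.mul_apply, mul_inv_cancel, AlgEquiv.one_apply]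
    have hmem : a ∈ IntermediateField.fixedField (⊤ : Subgroup (K ≃ₐ[F] K)) := fun g => hfix g
    rw [hbot, IntermediateField.mem_bot] at hmem
    exact hmem
  ext z
  simp only [Set.mem_setOf_eq, Set.mem_range]
  constructor
  · intro hz
    refine ⟨z 0, funext fun k => ?_⟩
    show (if (k : ℕ) = 0 then z 0 else 0) = z k
    by_cases h0 : (k : ℕ) = 0
    · rw [if_pos h0]
      congr 1
      exact Fin.ext (by simp [h0])
    · rw [if_neg h0]
      exact (nucleus_coord_zero m hm σ a hσa z (fun u v => (hz u v).1) k h0).symm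
  · rintro ⟨x, rfl⟩ u v
    refine ⟨?_, ?_, ?_⟩
    · rw [emb_mul m σ a u x, emb_mul m σ a (cycMul m σ a u v) x, smul_mul]
    · rw [mul_emb m σ a u x, emb_mul m σ a v x]
      exact mid_assoc m σ a x u v
    · rw [mul_emb m σ a (cycMul m σ a u v) x, mul_emb m σ a v x]
      exact (right_assoc m σ a hσm x u v).symm
end

section
/- Let D be a division ring, σ an injective ring endomorphism of D, m ≥ 2, and a₀, a₁, …, a_{m−1} ∈ D with a₀ ≠ 0. Define L : D^m → D^m (the left multiplication by t in the algebra S_f for f(t) = t^m − Σ_{i=0}^{m−1} a_i t^i ∈ D[t;σ]) by L(z₀, …, z_{m−1}) = (σ(z_{m−1})a₀, σ(z₀) + σ(z_{m−1})a₁, σ(z₁) + σ(z_{m−1})a₂, …, σ(z_{m−2}) + σ(z_{m−1})a_{m−1}). Then for every j ∈ {1, …, m−1}, the j-th iterate L^j is surjective if and only if σ is surjective. -/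
/-- Left multiplication by `t` in the algebra `S_f`, `f(t) = t^m − Σ a_i t^i ∈ D[t;σ]`,
written as an explicit map on `D^m`:
`L(z)_0 = σ(z_{m−1}) a_0` and `L(z)_i = σ(z_{i−1}) + σ(z_{m−1}) a_i` for `i ≥ 1`. -/
def Lmap (D : Type*) [DivisionRing D] (σ : D →+* D) (m : ℕ) (hm : 0 < m)
    (a : Fin m → D) (z : Fin m → D) : Fin m → D :=
  fun i =>
    (if h : 0 < (i : ℕ) then σ (z ⟨(i : ℕ) - 1, by have := i.isLt; omega⟩) else 0) +
      σ (z ⟨m - 1, by omega⟩) * a i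

lemma Lmap_surj_of_sigma_surj (D : Type*) [DivisionRing D] (σ : D →+* D)
    (m : ℕ) (hm : 2 ≤ m) (a : Fin m → D) (ha0 : a ⟨0, Nat.lt_of_lt_of_le (by norm_num) hm⟩ ≠ 0)
    (hσ : Function.Surjective σ) :
    Function.Surjective (Lmap D σ m (Nat.lt_of_lt_of_le (by norm_num) hm) a) := by
  intro w
  set τ := Function.surjInv hσ with hτ
  have hστ : ∀ x, σ (τ x) = x := fun x => Function.surjInv_eq hσ x
  refine ⟨fun i =>
    if h : (i : ℕ) = m - 1 then τ (w ⟨0, by omega⟩ * (a ⟨0, by omega⟩)⁻¹)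
    else τ (w ⟨(i : ℕ) + 1, by have := i.isLt; omega⟩
      - w ⟨0, by omega⟩ * (a ⟨0, by omega⟩)⁻¹ * a ⟨(i : ℕ) + 1, by have := i.isLt; omega⟩), ?_⟩
  funext i
  simp only [Lmap]
  by_cases h0 : 0 < (i : ℕ)
  · rw [dif_pos h0]
    have h1 : ¬ ((⟨(i : ℕ) - 1, by have := i.isLt; omega⟩ : Fin m) : ℕ) = m - 1 := by
      simp only []
      have := i.isLt; omega
    rw [dif_neg h1, dif_pos trivial, hστ, hστ]
    have hieq : (⟨((⟨(i : ℕ) - 1, by have := i.isLt; omega⟩ : Fin m) : ℕ) + 1,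
        by have := i.isLt; omega⟩ : Fin m) = i := by
      apply Fin.ext; simp; omega
    rw [hieq]
    exact sub_add_cancel _ _
  · rw [dif_neg h0]
    rw [dif_pos trivial, hστ]
    have hieq : i = (⟨0, by omega⟩ : Fin m) := by apply Fin.ext; simp; omega
    rw [hieq]
    rw [zero_add, mul_assoc, inv_mul_cancel₀ ha0, mul_one]

/-- Let `D` be a division ring, `σ` an injective ring endomorphism of
`D`, `m ≥ 2`, and `a₀, …, a_{m−1} ∈ D` with `a₀ ≠ 0`. Then for every `j ∈ {1,…,m−1}`,
the `j`-th iterate of the left-multiplication-by-`t` map `L` on `D^m` is surjective if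
and only if `σ` is surjective. -/
theorem stmt13 (D : Type*) [DivisionRing D] (σ : D →+* D) (hinj : Function.Injective σ)
    (m : ℕ) (hm : 2 ≤ m) (a : Fin m → D) (ha0 : a ⟨0, by omega⟩ ≠ 0) :
    ∀ j : ℕ, 1 ≤ j → j ≤ m - 1 →
      (Function.Surjective ((Lmap D σ m (by omega) a)^[j]) ↔ Function.Surjective σ) := by
  intro j hj1 hj2
  constructor
  · intro hsurj
    have hjj : j = (j - 1) + 1 := by omega
    rw [hjj, Function.iterate_succ'] at hsurj
    have hL : Function.Surjective (Lmap D σ m (by omega) a) :=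
      Function.Surjective.of_comp hsurj
    intro c
    obtain ⟨z, hz⟩ := hL (fun _ => c * a ⟨0, by omega⟩)
    have h0 := congrFun hz ⟨0, by omega⟩
    simp only [Lmap] at h0
    rw [dif_neg (lt_irrefl 0), zero_add] at h0
    refine ⟨z ⟨m - 1, by omega⟩, ?_⟩
    have : σ (z ⟨m - 1, by omega⟩) * a ⟨0, by omega⟩ = c * a ⟨0, by omega⟩ := h0
    exact mul_right_cancel₀ ha0 this
  · intro hσ
    exact (Lmap_surj_of_sigma_surj D σ m hm a ha0 hσ).iterate j
end

section
/- Let k₀ be a field, K = k₀(y) the field of rational functions, and σ : K → K the injective k₀-algebra endomorphism determined by σ(y) = y² (σ is not surjective). Let a ∈ k₀[y] be a nonzero polynomial whose degree in y is not divisible by 3. Define a multiplication on A = K × K by (x,z) ∘ (u,v) = (xu + zσ(v)a, xv + zσ(u)). Then: (i) σ(b)·b ≠ a for every b ∈ K; (ii) for every nonzero w ∈ A, the right multiplication map z ↦ z ∘ w is bijective; (iii) the left multiplication map z ↦ (0,1) ∘ z is not surjective. In particular A is a right division algebra but not a left division algebra. -/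
section aux
variable {k₀ : Type*} [Field k₀] (σ : RatFunc k₀ →+* RatFunc k₀)
  (hσC : ∀ c : k₀, σ (RatFunc.C c) = RatFunc.C c)
  (hσX : σ RatFunc.X = RatFunc.X ^ 2)

include hσC hσX

theorem sigma_algebraMap (p : Polynomial k₀) :
    σ (algebraMap (Polynomial k₀) (RatFunc k₀) p) =
      algebraMap (Polynomial k₀) (RatFunc k₀) (p.comp (Polynomial.X ^ 2)) := by
  induction p using Polynomial.induction_on with
  | C c => simp [RatFunc.algebraMap_C, hσC]
  | add p q hp hq => simp [map_add, hp, hq, Polynomial.add_comp]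
  | monomial n c ih =>
    simp only [map_mul, map_pow, RatFunc.algebraMap_C, RatFunc.algebraMap_X, hσC, hσX,
      Polynomial.mul_comp, Polynomial.C_comp, Polynomial.X_comp, Polynomial.pow_comp,
      ← pow_mul]

theorem sigma_intDegree (b : RatFunc k₀) (hb : b ≠ 0) :
    (σ b).intDegree = 2 * b.intDegree := by
  have hd : b.denom ≠ 0 := b.denom_ne_zero
  have hn : b.num ≠ 0 := RatFunc.num_ne_zero hb
  have hdm : algebraMap (Polynomial k₀) (RatFunc k₀) b.denom ≠ 0 := by simpa using hd
  have hbd : algebraMap (Polynomial k₀) (RatFunc k₀) b.num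
      = b * algebraMap (Polynomial k₀) (RatFunc k₀) b.denom :=
    (div_eq_iff hdm).mp (RatFunc.num_div_denom b)
  have hmul : σ b * algebraMap (Polynomial k₀) (RatFunc k₀) (b.denom.comp (Polynomial.X ^ 2)) =
      algebraMap (Polynomial k₀) (RatFunc k₀) (b.num.comp (Polynomial.X ^ 2)) := by
    rw [← sigma_algebraMap σ hσC hσX, ← sigma_algebraMap σ hσC hσX, ← map_mul, ← hbd]
  have hσb : σ b ≠ 0 := fun h => hb (σ.injective (by simpa using h))
  have hc0 : ∀ p : Polynomial k₀, p ≠ 0 → p.comp (Polynomial.X ^ 2) ≠ 0 := by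
    intro p hp h
    rcases Polynomial.comp_eq_zero_iff.mp h with h | ⟨h1, h2⟩
    · exact hp h
    · exact absurd h2 (by simp [Polynomial.X_ne_zero])
  have hdc := hc0 _ hd
  have hnc := hc0 _ hn
  have e1 : (σ b).intDegree + (b.denom.comp (Polynomial.X ^ 2)).natDegree
      = ((b.num.comp (Polynomial.X ^ 2)).natDegree : ℤ) := by
    rw [← RatFunc.intDegree_polynomial (p := b.denom.comp (Polynomial.X ^ 2)),
      ← RatFunc.intDegree_polynomial (p := b.num.comp (Polynomial.X ^ 2)),
      ← RatFunc.intDegree_mul hσb (by simpa using hdc), hmul]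
  rw [Polynomial.natDegree_comp, Polynomial.natDegree_comp] at e1
  simp only [Polynomial.natDegree_X_pow] at e1
  have : b.intDegree = (b.num.natDegree : ℤ) - b.denom.natDegree := rfl
  omega
end aux

/-- Multiplication of the algebra `S_f` for `f(t) = t² − A ∈ K[t;σ]`, `K = k₀(y)`, on
`K × K`: `(x,z) ∘ (u,v) = (xu + zσ(v)A, xv + zσ(u))`. -/
noncomputable def rfMul (k₀ : Type*) [Field k₀] (σ : RatFunc k₀ →+* RatFunc k₀) (A : RatFunc k₀)
    (p r : RatFunc k₀ × RatFunc k₀) : RatFunc k₀ × RatFunc k₀ :=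
  (p.1 * r.1 + p.2 * σ r.2 * A, p.1 * r.2 + p.2 * σ r.1)

/-- Let `K = k₀(y)` and `σ : K → K` the injective `k₀`-algebra
endomorphism with `σ(y) = y²` (not surjective). Let `a ∈ k₀[y]` be nonzero with
`3 ∤ deg_y(a)`, and let `A = S_f` for `f(t) = t² − a` with the multiplication above. Then:
(i) `σ(b)·b ≠ a` for every `b ∈ K`;
(ii) right multiplication by every nonzero element of `A` is bijective;
(iii) left multiplication by `t = (0,1)` is not surjective.
In particular `A` is a right division algebra but not a left division algebra. -/
theorem stmt14 (k₀ : Type*) [Field k₀]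
    (σ : RatFunc k₀ →+* RatFunc k₀)
    (hσC : ∀ c : k₀, σ (RatFunc.C c) = RatFunc.C c)
    (hσX : σ RatFunc.X = RatFunc.X ^ 2)
    (a : Polynomial k₀) (ha : a ≠ 0) (hdeg : ¬(3 ∣ a.natDegree)) :
    (∀ b : RatFunc k₀, σ b * b ≠ algebraMap (Polynomial k₀) (RatFunc k₀) a) ∧
    (∀ w : RatFunc k₀ × RatFunc k₀, w ≠ 0 →
      Function.Bijective fun z : RatFunc k₀ × RatFunc k₀ =>
        rfMul k₀ σ (algebraMap (Polynomial k₀) (RatFunc k₀) a) z w) ∧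
    ¬ Function.Surjective fun z : RatFunc k₀ × RatFunc k₀ =>
        rfMul k₀ σ (algebraMap (Polynomial k₀) (RatFunc k₀) a) (0, 1) z := by
  set A := algebraMap (Polynomial k₀) (RatFunc k₀) a with hA
  have hA0 : A ≠ 0 := by
    simpa [hA] using ha
  -- (i)
  have part1 : ∀ b : RatFunc k₀, σ b * b ≠ A := by
    intro b heq
    have hb : b ≠ 0 := by
      rintro rfl; simp at heq; exact hA0 heq.symm
    have hσb : σ b ≠ 0 := fun h => hb (σ.injective (by simpa using h))
    have hdint := congrArg RatFunc.intDegree heq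
    rw [RatFunc.intDegree_mul hσb hb, sigma_intDegree σ hσC hσX b hb, hA,
      RatFunc.intDegree_polynomial] at hdint
    exact hdeg ⟨b.intDegree.toNat, by omega⟩
  refine ⟨part1, ?_, ?_⟩
  -- (ii)
  · intro w hw
    obtain ⟨u, v⟩ := w
    have hd0 : u * σ u - v * σ v * A ≠ 0 := by
      intro h
      have hkey : u * σ u = v * σ v * A := sub_eq_zero.mp h
      by_cases hv : v = 0
      · have hu : u ≠ 0 := by
          rintro rfl; exact hw (by simp [hv])
        have hσu : σ u ≠ 0 := fun h => hu (σ.injective (by simpa using h))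
        rw [hv] at hkey
        simp only [map_zero, zero_mul, mul_zero] at hkey
        exact mul_ne_zero hu hσu hkey
      · have hσv : σ v ≠ 0 := fun h => hv (σ.injective (by simpa using h))
        apply part1 (u / v)
        rw [map_div₀]
        field_simp
        rw [mul_comm (σ u) u, hkey]; ring
    set d : RatFunc k₀ := u * σ u - v * σ v * A with hd
    rw [Function.bijective_iff_has_inverse]
    refine ⟨fun P => ((P.1 * σ u - P.2 * σ v * A) / d, (P.2 * u - P.1 * v) / d), ?_, ?_⟩
    · intro z
      simp only [rfMul]
      refine Prod.ext ?_ ?_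
      · show ((z.1 * u + z.2 * σ v * A) * σ u - (z.1 * v + z.2 * σ u) * σ v * A) / d = z.1
        rw [div_eq_iff hd0, hd]; ring
      · show ((z.1 * v + z.2 * σ u) * u - (z.1 * u + z.2 * σ v * A) * v) / d = z.2
        rw [div_eq_iff hd0, hd]; ring
    · intro P
      simp only [rfMul]
      refine Prod.ext ?_ ?_
      · show (P.1 * σ u - P.2 * σ v * A) / d * u + (P.2 * u - P.1 * v) / d * σ v * A = P.1
        rw [div_mul_eq_mul_div, div_mul_eq_mul_div, div_mul_eq_mul_div,
          ← add_div, div_eq_iff hd0, hd]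
        ring
      · show (P.1 * σ u - P.2 * σ v * A) / d * v + (P.2 * u - P.1 * v) / d * σ u = P.2
        rw [div_mul_eq_mul_div, div_mul_eq_mul_div, ← add_div, div_eq_iff hd0, hd]
        ring
  -- (iii)
  · intro hsurj
    obtain ⟨z, hz⟩ := hsurj (0, RatFunc.X)
    simp only [rfMul, zero_mul, one_mul, zero_add, Prod.mk.injEq] at hz
    obtain ⟨-, h2⟩ := hz
    have hz1 : z.1 ≠ 0 := by
      rintro h
      exact RatFunc.X_ne_zero (by rw [h] at h2; simpa using h2.symm)
    have := sigma_intDegree σ hσC hσX z.1 hz1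
    rw [h2, RatFunc.intDegree_X] at this
    omega
end
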